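/- arXiv:2105.05366 — 10 statements merged into one kernel-verified Lean document; each statement's English description precedes it below -/
import Mathlib

section
/- For every finite type α and every permutation π of α, in the pick-n-swap model with cells indexed by α, the minimum number N of pick-n-swap operations taken over all valid plans for π equals π.support.card + π.cycleType.card, i.e., the number of non-fixed points of π plus the number of cycles of length at least 2 in the cycle decomposition of π. (Both the lower bound, that every valid plan uses at least this many operations, and the existence of a valid plan with exactly this many operations, hold.) -/
/-- One pick-n-swap operation at cell `ℓ`: the state `(a, h)` becomes
`(Function.update a ℓ h, a ℓ)`. -/
def pnsStep {γ β : Type*} [DecidableEq γ]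
    (st : (γ → Option β) × Option β) (ℓ : γ) : (γ → Option β) × Option β :=
  (Function.update st.1 ℓ st.2, st.1 ℓ)

/-- Execute a plan (a list of cells) from a starting state. -/
def pnsExec {γ β : Type*} [DecidableEq γ]
    (start : (γ → Option β) × Option β) (plan : List γ) : (γ → Option β) × Option β :=
  plan.foldl pnsStep start

/-- A plan is valid for the permutation `π` (π i is the label of the item initially
at cell i) if executing it transforms the initial state into the sorted goal state. -/
def ValidPlan {α : Type*} [DecidableEq α] (π : Equiv.Perm α) (plan : List α) : Prop :=
  pnsExec (fun i => some (π i), none) plan = (fun i => some i, none)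

open Equiv Equiv.Perm Finset

namespace PNSProof

variable {β : Type*} [Fintype β] [DecidableEq β]

/-- Insertion of a fixed point `v` into the cycle of `u`. -/
theorem isCycle_mul_swap {d : Perm β} {u v : β}
    (hd : d.IsCycle) (hu : d u ≠ u) (hv : d v = v) (huv : u ≠ v) :
    IsCycle (d * Equiv.swap u v) := by
  set g := d * Equiv.swap u v with hg
  have hgu : g u = v := by simp [hg, Equiv.swap_apply_left, hv]
  have hgv : g v = d u := by simp [hg, Equiv.swap_apply_right]
  have hgy : ∀ y, y ≠ u → y ≠ v → g y = d y := by
    intro y h1 h2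
    simp [hg, Equiv.swap_apply_of_ne_of_ne h1 h2]
  refine ⟨u, by rw [hgu]; exact fun h => huv h.symm, ?_⟩
  intro y hy
  rcases eq_or_ne y u with rfl | hyu
  · exact SameCycle.refl _ _
  rcases eq_or_ne y v with rfl | hyv
  · exact ⟨1, by simpa using hgu⟩
  have hdy : d y ≠ y := by
    rw [hgy y hyu hyv] at hy; exact hy
  obtain ⟨n, hn⟩ := hd.exists_pow_eq hu hdy
  have hPex : ∃ m : ℕ, (d ^ m) u = y := ⟨n, hn⟩
  classical
  set n₀ := Nat.find hPex with hn₀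
  have hn₀spec : (d ^ n₀) u = y := Nat.find_spec hPex
  have hn₀pos : 1 ≤ n₀ := by
    rcases Nat.eq_zero_or_pos n₀ with h | h
    · exfalso; apply hyu; rw [← hn₀spec, h, pow_zero]; rfl
    · exact h
  have hnotu : ∀ j, 1 ≤ j → j < n₀ → (d ^ j) u ≠ u := by
    intro j h1 h2 hju
    have hyy : (d ^ (n₀ - j)) ((d ^ j) u) = y := by
      rw [← Equiv.Perm.mul_apply, ← pow_add, Nat.sub_add_cancel (le_of_lt h2)]
      exact hn₀spec
    rw [hju] at hyy
    exact absurd hyy (Nat.find_min hPex (by omega))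
  have claim : ∀ k, 1 ≤ k → k ≤ n₀ → (g ^ (k + 1)) u = (d ^ k) u := by
    intro k
    induction k with
    | zero => omega
    | succ k ih =>
      intro _ hk
      rcases Nat.eq_zero_or_pos k with rfl | hkpos
      · show (g ^ 2) u = (d ^ 1) u
        rw [pow_two, pow_one, Equiv.Perm.mul_apply, hgu, hgv]
      · have hk' : k ≤ n₀ := by omega
        have ih' := ih hkpos hk'
        have h1 : (d ^ k) u ≠ u := hnotu k hkpos (by omega)
        have h2 : (d ^ k) u ≠ v := by
          intro h
          have : (d ^ k) u ∈ d.support := pow_apply_mem_support.2 (mem_support.2 hu)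
          rw [h, mem_support] at this; exact this hv
        calc (g ^ (k + 1 + 1)) u = g ((g ^ (k + 1)) u) := by
              rw [← Equiv.Perm.mul_apply, ← pow_succ']
          _ = g ((d ^ k) u) := by rw [ih']
          _ = d ((d ^ k) u) := hgy _ h1 h2
          _ = (d ^ (k + 1)) u := by rw [← Equiv.Perm.mul_apply, ← pow_succ']
  exact ⟨(n₀ + 1 : ℕ), by rw [zpow_natCast, claim n₀ hn₀pos le_rfl, hn₀spec]⟩

theorem support_mul_swap {d : Perm β} {u v : β}
    (hu : d u ≠ u) (hv : d v = v) (huv : u ≠ v) :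
    (d * Equiv.swap u v).support = insert v d.support := by
  have hdu : d u ≠ v := by
    intro h
    have : d u ∈ d.support := apply_mem_support.2 (mem_support.2 hu)
    rw [h, mem_support] at this; exact this hv
  ext y
  rcases eq_or_ne y u with rfl | hyu
  · simp [Equiv.Perm.mul_apply, Equiv.swap_apply_left, hv, mem_support, Ne.symm huv, hu, huv]
  rcases eq_or_ne y v with rfl | hyv
  · simp [Equiv.Perm.mul_apply, Equiv.swap_apply_right, mem_support, hdu]
  · simp [Equiv.Perm.mul_apply, Equiv.swap_apply_of_ne_of_ne hyu hyv, mem_support, hyv]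

/-- Deletion: if `d u = v`, multiplying by `swap u v` removes `v` from the cycle. -/
theorem isCycle_mul_swap_del {d : Perm β} {u v : β}
    (hd : d.IsCycle) (huv : u ≠ v) (h1 : d u = v) (h2 : d v ≠ u) :
    IsCycle (d * Equiv.swap u v) ∧
      (d * Equiv.swap u v).support = d.support.erase v := by
  have hdinv : d⁻¹ v = u := by simp [← h1]
  have hx : d⁻¹ v ≠ v := by rw [hdinv]; exact huv
  have hffx : d⁻¹ (d⁻¹ v) ≠ v := by
    rw [hdinv]
    intro h
    rw [Equiv.Perm.inv_eq_iff_eq] at h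
    exact h2 h.symm
  have hkey : (d * Equiv.swap u v)⁻¹ = Equiv.swap v (d⁻¹ v) * d⁻¹ := by
    rw [hdinv, mul_inv_rev, Equiv.swap_inv, Equiv.swap_comm]
  constructor
  · have := (hd.inv.swap_mul hx hffx)
    rw [← hkey] at this
    simpa using this.inv
  · have hs := support_swap_mul_eq d⁻¹ v hffx
    rw [← hkey, support_inv, support_inv] at hs
    rw [hs, Finset.sdiff_singleton_eq_erase]


theorem decomp (σ : Perm β) {a : β} (ha : σ a ≠ a) :
    ∃ ρ : Perm β, σ = σ.cycleOf a * ρ ∧ (σ.cycleOf a).Disjoint ρ ∧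
      Multiset.card σ.cycleType = Multiset.card ρ.cycleType + 1 ∧
      σ.support.card = (σ.cycleOf a).support.card + ρ.support.card := by
  classical
  have hmem : σ.cycleOf a ∈ σ.cycleFactorsFinset :=
    cycleOf_mem_cycleFactorsFinset_iff.mpr (mem_support.mpr ha)
  have hdisj := disjoint_mul_inv_of_mem_cycleFactorsFinset hmem
  have heq : σ = σ.cycleOf a * (σ * (σ.cycleOf a)⁻¹) := by
    have hc := hdisj.commute.eq
    calc σ = σ * (σ.cycleOf a)⁻¹ * σ.cycleOf a := by group
    _ = σ.cycleOf a * (σ * (σ.cycleOf a)⁻¹) := by rw [← hc]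
  refine ⟨σ * (σ.cycleOf a)⁻¹, heq, hdisj.symm, ?_, ?_⟩
  · rw [cycleType_mul_inv_mem_cycleFactorsFinset_eq_sub hmem,
      Multiset.card_sub (cycleType_le_of_mem_cycleFactorsFinset hmem)]
    have h1 : σ ≠ 1 := fun h => ha (by rw [h]; rfl)
    have h2 := card_cycleType_pos.mpr h1
    have h3 := card_cycleType_eq_one.mpr (isCycle_cycleOf σ ha)
    omega
  · conv_lhs => rw [heq]
    exact hdisj.symm.card_support_mul

end PNSProof

namespace PNSProof

variable {α : Type*} [Fintype α] [DecidableEq α]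

noncomputable def phi (σ : Perm (Option α)) : ℤ :=
  (σ.support.card : ℤ) + Multiset.card σ.cycleType + (if σ none = none then 0 else -2)

theorem phi_one : phi (1 : Perm (Option α)) = 0 := by
  simp [phi]

theorem phi_nonneg (σ : Perm (Option α)) : 0 ≤ phi σ := by
  by_cases h : σ none = none
  · simp only [phi, h, if_true, reduceIte]
    push_cast
    omega
  · have h1 : σ ≠ 1 := fun hh => h (by rw [hh]; rfl)
    have h2 := one_lt_card_support_of_ne_one h1
    have h3 := card_cycleType_pos.mpr h1
    simp only [phi, if_neg h]
    push_cast
    omega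

end PNSProof


namespace PNSProof

variable {α : Type*} [Fintype α] [DecidableEq α]

theorem step_decomp (σ : Perm (Option α)) {b : Option α} (hb : σ b ≠ b)
    (a : Option α)
    (haf : a ∈ σ.support → a ∈ (σ.cycleOf b).support)
    (hnf : none ∈ σ.support → none ∈ (σ.cycleOf b).support) :
    ∃ ρ : Perm (Option α),
      σ = σ.cycleOf b * ρ ∧
      σ * Equiv.swap a none = σ.cycleOf b * Equiv.swap a none * ρ ∧
      (σ.cycleOf b * Equiv.swap a none).Disjoint ρ ∧
      ρ a = a ∧ ρ none = none ∧
      Multiset.card σ.cycleType = Multiset.card ρ.cycleType + 1 ∧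
      σ.support.card = (σ.cycleOf b).support.card + ρ.support.card := by
  classical
  obtain ⟨ρ, hσeq, hdisj, hct, hsc⟩ := decomp σ hb
  have hρsub : ρ.support ⊆ σ.support := by
    conv_rhs => rw [hσeq]
    rw [hdisj.support_mul]
    exact Finset.subset_union_right
  have hfix : ∀ y, (y ∈ σ.support → y ∈ (σ.cycleOf b).support) → ρ y = y := by
    intro y hy
    by_cases h : y ∈ σ.support
    · exact (hdisj y).resolve_left (mem_support.mp (hy h))
    · by_contra hne
      exact h (hρsub (mem_support.mpr hne))
  have hρa : ρ a = a := hfix a haf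
  have hρn : ρ none = none := hfix none hnf
  have hρs : ρ.Disjoint (Equiv.swap a none) := by
    intro y
    rcases eq_or_ne y a with rfl | hya
    · exact Or.inl hρa
    rcases eq_or_ne y none with rfl | hyn
    · exact Or.inl hρn
    · exact Or.inr (Equiv.swap_apply_of_ne_of_ne hya hyn)
  have hτeq : σ * Equiv.swap a none = σ.cycleOf b * Equiv.swap a none * ρ := by
    conv_lhs => rw [hσeq]
    rw [mul_assoc, hρs.commute.eq, ← mul_assoc]
  refine ⟨ρ, hσeq, hτeq, ?_, hρa, hρn, hct, hsc⟩
  intro y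
  rcases eq_or_ne y a with rfl | hya
  · exact Or.inr hρa
  rcases eq_or_ne y none with rfl | hyn
  · exact Or.inr hρn
  · rcases hdisj y with h | h
    · exact Or.inl (by rw [Equiv.Perm.mul_apply, Equiv.swap_apply_of_ne_of_ne hya hyn, h])
    · exact Or.inr h

end PNSProof

namespace PNSProof

variable {α : Type*} [Fintype α] [DecidableEq α]

theorem D1 (σ : Perm (Option α)) {x : α} (h2 : σ none = none) (h1 : σ (some x) ≠ some x) :
    phi (σ * Equiv.swap (some x) none) = phi σ - 1 := by
  classical
  set a : Option α := some x with hadef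
  have han : a ≠ none := by simp [hadef]
  set τ := σ * Equiv.swap a none with hτdef
  have hnotsup : none ∉ σ.support := by simp [mem_support, h2]
  obtain ⟨ρ, hσeq, hτeq, hdisj2, hρa, hρn, hct, hsc⟩ :=
    step_decomp σ h1 a (fun h => mem_support_cycleOf_iff.mpr ⟨SameCycle.refl _ _, h⟩)
      (fun h => absurd h hnotsup)
  have hda : σ.cycleOf a a ≠ a := by rw [cycleOf_apply_self]; exact h1
  have hdn : σ.cycleOf a none = none := by
    by_contra h
    exact hnotsup (support_cycleOf_le σ a (mem_support.mpr h))
  have hcycle := isCycle_mul_swap (isCycle_cycleOf σ h1) hda hdn han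
  have hτsupp : τ.support.card = σ.support.card + 1 := by
    rw [hτdef, hτeq, hdisj2.card_support_mul, support_mul_swap hda hdn han,
      Finset.card_insert_of_notMem (fun h => hnotsup (support_cycleOf_le σ a h)), hsc]
    ring
  have hτct : Multiset.card τ.cycleType = Multiset.card σ.cycleType := by
    rw [hτdef, hτeq, hdisj2.cycleType_mul, Multiset.card_add, card_cycleType_eq_one.mpr hcycle, hct]
    omega
  have hτn : τ none ≠ none := by
    rw [hτdef]
    show σ (Equiv.swap a none none) ≠ none
    rw [Equiv.swap_apply_right]
    intro h
    exact han (σ.injective (h.trans h2.symm))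
  rw [phi, phi, hτsupp, hτct, if_neg hτn, if_pos h2]
  push_cast
  ring

theorem D2 (σ : Perm (Option α)) {x : α} (h2 : σ none = some x) (hax : σ (some x) ≠ none) :
    phi (σ * Equiv.swap (some x) none) = phi σ - 1 := by
  classical
  set a : Option α := some x with hadef
  have han : a ≠ none := by simp [hadef]
  have hna : (none : Option α) ≠ a := Ne.symm han
  have hb : σ none ≠ none := by rw [h2]; exact han
  have hscna : σ.SameCycle none a := ⟨1, by simpa using h2⟩
  set τ := σ * Equiv.swap a none with hτdef
  obtain ⟨ρ, hσeq, hτeq, hdisj2, hρa, hρn, hct, hsc⟩ :=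
    step_decomp σ hb a (fun _ => mem_support_cycleOf_iff.mpr ⟨hscna, mem_support.mpr hb⟩)
      (fun h => mem_support_cycleOf_iff.mpr ⟨SameCycle.refl _ _, h⟩)
  have hdn : σ.cycleOf none none = a := by rw [cycleOf_apply_self, h2]
  have hda : σ.cycleOf none a = σ a := hscna.cycleOf_apply
  have hnd : none ∈ (σ.cycleOf none).support := by
    rw [mem_support, hdn]; exact han
  have had : a ∈ (σ.cycleOf none).support := by
    rw [← hdn]; exact apply_mem_support.mpr hnd
  have hpair := isCycle_mul_swap_del (isCycle_cycleOf σ hb) hna hdn (by rw [hda]; exact hax)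
  have hswapcomm : Equiv.swap a none = Equiv.swap none a := Equiv.swap_comm a none
  have hτsupp : τ.support.card + 1 = σ.support.card := by
    rw [hτdef, hτeq, hdisj2.card_support_mul, hswapcomm, hpair.2, Finset.card_erase_of_mem had,
      hsc]
    have : 1 ≤ (σ.cycleOf none).support.card := Finset.card_pos.mpr ⟨none, hnd⟩
    omega
  have hτct : Multiset.card τ.cycleType = Multiset.card σ.cycleType := by
    rw [hτdef, hτeq, hdisj2.cycleType_mul, Multiset.card_add, hswapcomm,
      card_cycleType_eq_one.mpr hpair.1, hct]
    omega
  have hτn : τ none ≠ none := by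
    rw [hτdef]
    show σ (Equiv.swap a none none) ≠ none
    rw [Equiv.swap_apply_right]
    exact hax
  rw [phi, phi, if_neg hτn, if_neg hb, ← hτsupp, hτct]
  push_cast
  ring

theorem D2' (σ : Perm (Option α)) {x : α} (h2 : σ none = some x) (hax : σ (some x) = none) :
    phi (σ * Equiv.swap (some x) none) = phi σ - 1 := by
  classical
  set a : Option α := some x with hadef
  have han : a ≠ none := by simp [hadef]
  have hna : (none : Option α) ≠ a := Ne.symm han
  have hb : σ none ≠ none := by rw [h2]; exact han
  have hscna : σ.SameCycle none a := ⟨1, by simpa using h2⟩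
  set τ := σ * Equiv.swap a none with hτdef
  obtain ⟨ρ, hσeq, hτeq, hdisj2, hρa, hρn, hct, hsc⟩ :=
    step_decomp σ hb a (fun _ => mem_support_cycleOf_iff.mpr ⟨hscna, mem_support.mpr hb⟩)
      (fun h => mem_support_cycleOf_iff.mpr ⟨SameCycle.refl _ _, h⟩)
  have hdn : σ.cycleOf none none = a := by rw [cycleOf_apply_self, h2]
  have hda : σ.cycleOf none a = σ a := hscna.cycleOf_apply
  have hdnn : σ.cycleOf none none ≠ none := by rw [hdn]; exact han
  have heqswap : σ.cycleOf none = Equiv.swap none a := by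
    have := (isCycle_cycleOf σ hb).eq_swap_of_apply_apply_eq_self hdnn
      (by rw [hdn, hda, hax])
    rw [this, hdn]
  have hone : σ.cycleOf none * Equiv.swap a none = 1 := by
    rw [heqswap, Equiv.swap_comm a none, Equiv.swap_mul_self]
  have hτρ : τ = ρ := by rw [hτdef, hτeq, hone, one_mul]
  have hsd : (σ.cycleOf none).support.card = 2 := by
    rw [heqswap]; exact Equiv.Perm.card_support_swap hna
  have hρnone : ρ none = none := hρn
  rw [hτρ, phi, phi, if_pos hρnone, if_neg hb, hsc, hct, hsd]
  push_cast
  ring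
end PNSProof

namespace PNSProof

variable {α : Type*} [Fintype α] [DecidableEq α]

theorem key (σ : Perm (Option α)) (x : α) :
    phi σ ≤ phi (σ * Equiv.swap (some x) none) + 1 := by
  classical
  set a : Option α := some x with hadef
  have han : a ≠ none := by simp [hadef]
  set τ := σ * Equiv.swap a none with hτdef
  have τa : τ a = σ none := by
    rw [hτdef]; show σ (Equiv.swap a none a) = σ none; rw [Equiv.swap_apply_left]
  have τn : τ none = σ a := by
    rw [hτdef]; show σ (Equiv.swap a none none) = σ a; rw [Equiv.swap_apply_right]
  have τy : ∀ y, y ≠ a → y ≠ none → τ y = σ y := by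
    intro y hy1 hy2
    rw [hτdef]; show σ (Equiv.swap a none y) = σ y; rw [Equiv.swap_apply_of_ne_of_ne hy1 hy2]
  by_cases h1 : σ a = a
  · by_cases h2 : σ none = none
    · -- case A : both fixed
      have hdisj : σ.Disjoint (Equiv.swap a none) := by
        intro y
        rcases eq_or_ne y a with rfl | hya
        · exact Or.inl h1
        rcases eq_or_ne y none with rfl | hyn
        · exact Or.inl h2
        · exact Or.inr (Equiv.swap_apply_of_ne_of_ne hya hyn)
      have hsupp : τ.support.card = σ.support.card + 2 := by
        rw [hτdef, hdisj.card_support_mul, card_support_swap han]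
      have hct : Multiset.card τ.cycleType = Multiset.card σ.cycleType + 1 := by
        rw [hτdef, hdisj.cycleType_mul, Multiset.card_add,
          card_cycleType_eq_one.mpr (isCycle_swap han)]
      have hτn : τ none ≠ none := by rw [τn, h1]; exact han
      rw [phi, phi, hsupp, hct, if_neg hτn, if_pos h2]
      push_cast
      linarith
    · -- case B : σ a = a, σ none ≠ none
      have hna' : σ none ≠ a := fun h => han (σ.injective (h1.trans h.symm))
      have hanot : a ∉ σ.support := notMem_support.mpr h1
      obtain ⟨ρ, hσeq, hτeq, hdisj2, hρa, hρn, hct, hsc'⟩ :=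
        step_decomp σ h2 a (fun h => absurd h hanot)
          (fun h => mem_support_cycleOf_iff.mpr ⟨SameCycle.refl _ _, h⟩)
      have hdn : σ.cycleOf none none = σ none := cycleOf_apply_self σ none
      have hEne : σ.cycleOf none * Equiv.swap a none ≠ 1 := by
        intro h
        have h' : (σ.cycleOf none * Equiv.swap a none) a = a := by rw [h]; rfl
        rw [Equiv.Perm.mul_apply, Equiv.swap_apply_left, hdn] at h'
        exact hna' h'
      have hcτ : Multiset.card τ.cycleType =
          Multiset.card (σ.cycleOf none * Equiv.swap a none).cycleType +
            Multiset.card ρ.cycleType := by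
        rw [hτdef, hτeq, hdisj2.cycleType_mul, Multiset.card_add]
      have hcE := card_cycleType_pos.mpr hEne
      have hsτ : τ.support = insert a σ.support := by
        ext y
        rcases eq_or_ne y a with rfl | hya
        · simp [mem_support, τa, hna']
        rcases eq_or_ne y none with rfl | hyn
        · simp [mem_support, τn, h1, han, h2]
        · simp [mem_support, τy y hya hyn, hya]
      have hcard : τ.support.card = σ.support.card + 1 := by
        rw [hsτ, Finset.card_insert_of_notMem hanot]
      rw [phi, phi, hcard, if_neg (show τ none ≠ none by rw [τn, h1]; exact han), if_neg h2, hcτ]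
      push_cast
      omega
  · by_cases h2 : σ none = none
    · -- case C1 : exact D1
      rw [show phi τ = phi σ - 1 from D1 σ h2 h1]
      linarith
    · by_cases h3 : σ none = a
      · by_cases h4 : σ a = none
        · rw [show phi τ = phi σ - 1 from D2' σ h3 h4]
          linarith
        · rw [show phi τ = phi σ - 1 from D2 σ h3 h4]
          linarith
      · by_cases hsc : σ.SameCycle a none
        · -- same cycle, σ none ≠ a
          obtain ⟨ρ, hσeq, hτeq, hdisj2, hρa, hρn, hct, hsc'⟩ :=
            step_decomp σ h1 a
              (fun _ => mem_support_cycleOf_iff.mpr ⟨SameCycle.refl _ _, mem_support.mpr h1⟩)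
              (fun _ => mem_support_cycleOf_iff.mpr ⟨hsc, mem_support.mpr h1⟩)
          have hdn : σ.cycleOf a none = σ none := hsc.cycleOf_apply
          have hEne : σ.cycleOf a * Equiv.swap a none ≠ 1 := by
            intro h
            have h' : (σ.cycleOf a * Equiv.swap a none) a = a := by rw [h]; rfl
            rw [Equiv.Perm.mul_apply, Equiv.swap_apply_left, hdn] at h'
            exact h3 h'
          have hcτ : Multiset.card τ.cycleType =
              Multiset.card (σ.cycleOf a * Equiv.swap a none).cycleType +
                Multiset.card ρ.cycleType := by
            rw [hτdef, hτeq, hdisj2.cycleType_mul, Multiset.card_add]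
          have hcE := card_cycleType_pos.mpr hEne
          by_cases h4 : σ a = none
          · have hsτ : τ.support = σ.support.erase none := by
              ext y
              rcases eq_or_ne y a with rfl | hya
              · simp [mem_support, τa, h3, han, h1]
              rcases eq_or_ne y none with rfl | hyn
              · simp [mem_support, τn, h4]
              · simp [mem_support, τy y hya hyn, hyn]
            have hτn0 : τ none = none := by rw [τn, h4]
            have hspos : 1 ≤ σ.support.card := Finset.card_pos.mpr ⟨none, mem_support.mpr h2⟩
            have hsτcard : τ.support.card + 1 = σ.support.card := by
              rw [hsτ, Finset.card_erase_of_mem (mem_support.mpr h2)]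
              omega
            rw [phi, phi, if_pos hτn0, if_neg h2, hcτ]
            push_cast
            omega
          · have hsτ : τ.support = σ.support := by
              ext y
              rcases eq_or_ne y a with rfl | hya
              · simp [mem_support, τa, h3, h1]
              rcases eq_or_ne y none with rfl | hyn
              · simp [mem_support, τn, h4, h2]
              · simp [mem_support, τy y hya hyn]
            rw [phi, phi, hsτ, if_neg (show τ none ≠ none by rw [τn]; exact h4), if_neg h2, hcτ]
            push_cast
            omega
        · -- different cycles
          have hσan : σ a ≠ none := fun h => hsc ⟨1, by simpa using h⟩
          obtain ⟨ρ₁, hσeq1, hdisj1, hct1, hsc1⟩ := decomp σ h1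
          have hnd₁ : none ∉ (σ.cycleOf a).support := by
            rw [mem_support_cycleOf_iff]
            rintro ⟨h, -⟩; exact hsc h
          have had₁ : a ∈ (σ.cycleOf a).support := by
            rw [mem_support_cycleOf_iff]
            exact ⟨SameCycle.refl _ _, mem_support.mpr h1⟩
          have hρ₁a : ρ₁ a = a := (hdisj1 a).resolve_left (mem_support.mp had₁)
          have hd₁n : (σ.cycleOf a) none = none := notMem_support.mp hnd₁
          have hd₁a : (σ.cycleOf a) a = σ a := cycleOf_apply_self σ a
          have hρ₁n : ρ₁ none ≠ none := by
            intro h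
            apply h2
            conv_lhs => rw [hσeq1]
            rw [Equiv.Perm.mul_apply, h, hd₁n]
          obtain ⟨ρ, hσeq2, hdisj2, hct2, hsc2⟩ := decomp ρ₁ hρ₁n
          have hsuppρ₁ : ρ₁.support = (ρ₁.cycleOf none).support ∪ ρ.support := by
            conv_lhs => rw [hσeq2]
            exact hdisj2.support_mul
          have hnd₂ : none ∈ (ρ₁.cycleOf none).support := by
            rw [mem_support_cycleOf_iff]
            exact ⟨SameCycle.refl _ _, mem_support.mpr hρ₁n⟩
          have had₂ : a ∉ (ρ₁.cycleOf none).support := fun h =>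
            (notMem_support.mpr hρ₁a) (support_cycleOf_le ρ₁ none h)
          have hd₂a : (ρ₁.cycleOf none) a = a := notMem_support.mp had₂
          have hρa : ρ a = a := by
            have h' : a ∉ ρ.support := fun h =>
              (notMem_support.mpr hρ₁a) (hsuppρ₁ ▸ Finset.mem_union_right _ h)
            exact notMem_support.mp h'
          have hρn : ρ none = none := (hdisj2 none).resolve_left (mem_support.mp hnd₂)
          have hρs : ρ.Disjoint (Equiv.swap a none) := by
            intro y
            rcases eq_or_ne y a with rfl | hya
            · exact Or.inl hρa
            rcases eq_or_ne y none with rfl | hyn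
            · exact Or.inl hρn
            · exact Or.inr (Equiv.swap_apply_of_ne_of_ne hya hyn)
          have hτeq : τ = σ.cycleOf a * ρ₁.cycleOf none * Equiv.swap a none * ρ := by
            rw [hτdef]
            conv_lhs => rw [hσeq1, hσeq2]
            rw [← mul_assoc (σ.cycleOf a) (ρ₁.cycleOf none) ρ,
              mul_assoc (σ.cycleOf a * ρ₁.cycleOf none) ρ (Equiv.swap a none),
              hρs.commute.eq, ← mul_assoc]
          have hdisjE : (σ.cycleOf a * ρ₁.cycleOf none * Equiv.swap a none).Disjoint ρ := by
            intro y
            rcases eq_or_ne y a with rfl | hya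
            · exact Or.inr hρa
            rcases eq_or_ne y none with rfl | hyn
            · exact Or.inr hρn
            by_cases hy : ρ y = y
            · exact Or.inr hy
            · left
              have hρ₁y : ρ₁ y ≠ y :=
                mem_support.mp (hsuppρ₁ ▸ Finset.mem_union_right _ (mem_support.mpr hy))
              have h₂y : (ρ₁.cycleOf none) y = y := (hdisj2 y).resolve_right hy
              have h₁y : (σ.cycleOf a) y = y := (hdisj1 y).resolve_right hρ₁y
              rw [Equiv.Perm.mul_apply, Equiv.Perm.mul_apply,
                Equiv.swap_apply_of_ne_of_ne hya hyn, h₂y, h₁y]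
          have hEne : σ.cycleOf a * ρ₁.cycleOf none * Equiv.swap a none ≠ 1 := by
            intro h
            have h' : (σ.cycleOf a * ρ₁.cycleOf none * Equiv.swap a none) none = none := by
              rw [h]; rfl
            rw [Equiv.Perm.mul_apply, Equiv.Perm.mul_apply, Equiv.swap_apply_right, hd₂a,
              hd₁a] at h'
            exact hσan h'
          have hcτ : Multiset.card τ.cycleType =
              Multiset.card (σ.cycleOf a * ρ₁.cycleOf none * Equiv.swap a none).cycleType +
                Multiset.card ρ.cycleType := by
            rw [hτeq, hdisjE.cycleType_mul, Multiset.card_add]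
          have hcE := card_cycleType_pos.mpr hEne
          have hsτ : τ.support = σ.support := by
            ext y
            rcases eq_or_ne y a with rfl | hya
            · simp [mem_support, τa, h3, h1]
            rcases eq_or_ne y none with rfl | hyn
            · simp [mem_support, τn, hσan, h2]
            · simp [mem_support, τy y hya hyn]
          rw [phi, phi, hsτ, if_neg (show τ none ≠ none by rw [τn]; exact hσan), if_neg h2, hcτ]
          push_cast
          omega

end PNSProof

namespace PNSProof

variable {α : Type*} [Fintype α] [DecidableEq α]

def prodSwaps (L : List α) : Perm (Option α) :=
  (L.map (fun x => Equiv.swap (some x) none)).prod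

theorem lower (L : List α) : ∀ σ : Perm (Option α), σ * prodSwaps L = 1 →
    phi σ ≤ (L.length : ℤ) := by
  induction L with
  | nil =>
    intro σ h
    simp only [prodSwaps, List.map_nil, List.prod_nil, mul_one] at h
    rw [h, phi_one]
    simp
  | cons y t ih =>
    intro σ h
    have h' : (σ * Equiv.swap (some y) none) * prodSwaps t = 1 := by
      simpa [prodSwaps, mul_assoc] using h
    have h2 := ih _ h'
    have hk := key σ y
    simp only [List.length_cons]
    push_cast
    linarith

theorem upper : ∀ n : ℕ, ∀ σ : Perm (Option α), phi σ = n →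
    ∃ L : List α, σ * prodSwaps L = 1 ∧ L.length = n := by
  intro n
  induction n using Nat.strong_induction_on with
  | _ n IH =>
    intro σ hσ
    by_cases h : σ = 1
    · refine ⟨[], by simp [h, prodSwaps], ?_⟩
      have h0 : (n : ℤ) = 0 := by rw [← hσ, h, phi_one]
      exact_mod_cast h0.symm
    · obtain ⟨x, hx⟩ : ∃ x : α, phi (σ * Equiv.swap (some x) none) = phi σ - 1 := by
        by_cases h2 : σ none = none
        · obtain ⟨b, hb⟩ := Finset.nonempty_iff_ne_empty.mpr
            (fun he => h (support_eq_empty_iff.mp he))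
          have hbne : b ≠ none := by
            intro hbn
            subst hbn
            exact (mem_support.mp hb) h2
          obtain ⟨x, rfl⟩ := Option.ne_none_iff_exists'.mp hbne
          exact ⟨x, D1 σ h2 (mem_support.mp hb)⟩
        · obtain ⟨x, hx2⟩ : ∃ x, σ none = some x := Option.ne_none_iff_exists'.mp h2
          by_cases h4 : σ (some x) = none
          · exact ⟨x, D2' σ hx2 h4⟩
          · exact ⟨x, D2 σ hx2 h4⟩
      have hpos : 1 ≤ n := by
        have h0 := phi_nonneg (σ * Equiv.swap (some x) none)
        rw [hx, hσ] at h0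
        exact_mod_cast by linarith [h0]
      have hτn : phi (σ * Equiv.swap (some x) none) = ((n - 1 : ℕ) : ℤ) := by
        rw [hx, hσ, Nat.cast_sub hpos]
        ring
      obtain ⟨L, hL1, hL2⟩ := IH (n - 1) (by omega) _ hτn
      refine ⟨x :: L, ?_, by simp [hL2]; omega⟩
      rw [prodSwaps, List.map_cons, List.prod_cons, ← mul_assoc]
      exact hL1

def toState (σ : Perm (Option α)) : (α → Option α) × Option α :=
  (fun i => σ (some i), σ none)

theorem pnsStep_toState (σ : Perm (Option α)) (ℓ : α) :
    pnsStep (toState σ) ℓ = toState (σ * Equiv.swap (some ℓ) none) := by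
  unfold pnsStep toState
  refine Prod.ext ?_ ?_
  · funext i
    by_cases h : i = ℓ
    · subst h
      simp [Equiv.Perm.mul_apply]
    · simp [Function.update_of_ne h, Equiv.Perm.mul_apply,
        Equiv.swap_apply_of_ne_of_ne (show (some i : Option α) ≠ some ℓ by simpa using h)
          (Option.some_ne_none i)]
  · simp [Equiv.Perm.mul_apply]

theorem pnsExec_toState (σ : Perm (Option α)) (L : List α) :
    pnsExec (toState σ) L = toState (σ * prodSwaps L) := by
  induction L generalizing σ with
  | nil => simp [pnsExec, prodSwaps, toState]
  | cons y t ih =>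
    show pnsExec (pnsStep (toState σ) y) t = _
    rw [pnsStep_toState, ih]
    congr 1

theorem validPlan_iff (π : Perm α) (L : List α) :
    ValidPlan π L ↔ (optionCongr π) * prodSwaps L = 1 := by
  have hstart : ((fun i => some (π i), (none : Option α)) : (α → Option α) × Option α) =
      toState (optionCongr π) := by
    unfold toState
    refine Prod.ext (funext fun i => ?_) ?_ <;> simp
  have hgoal : ((fun i => some i, (none : Option α)) : (α → Option α) × Option α) =
      toState 1 := by
    unfold toState; simp
  rw [ValidPlan, hstart, pnsExec_toState, hgoal]
  constructor
  · intro h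
    refine Equiv.ext fun o => ?_
    rcases o with _ | i
    · exact congrArg Prod.snd h
    · exact congrArg (fun p => p.1 i) h
  · intro h; rw [h]

theorem support_optionCongr (π : Perm α) :
    Equiv.Perm.support (optionCongr π) = π.support.map ⟨some, Option.some_injective α⟩ := by
  ext o
  rcases o with _ | i <;> simp [mem_support]

theorem cycleType_optionCongr (π : Perm α) :
    Equiv.Perm.cycleType (optionCongr π) = π.cycleType := by
  have hext : optionCongr π = π.extendDomain (Equiv.optionIsSomeEquiv α).symm := by
    refine Equiv.ext fun o => ?_
    rcases o with _ | i
    · rw [Equiv.Perm.extendDomain_apply_not_subtype (e := π)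
        (f := (Equiv.optionIsSomeEquiv α).symm) (b := none) (by simp)]
      simp
    · exact (by simp : (optionCongr π) (some i) = some (π i)).trans
        (Equiv.Perm.extendDomain_apply_image (e := π)
          (f := (Equiv.optionIsSomeEquiv α).symm) i).symm
  rw [hext, cycleType_extendDomain]

theorem phi_optionCongr (π : Perm α) :
    phi (optionCongr π) = (π.support.card : ℤ) + Multiset.card π.cycleType := by
  rw [phi, support_optionCongr, cycleType_optionCongr, Finset.card_map, if_pos (by simp)]
  ring

end PNSProof

/-- The minimum number of pick-n-swap operations over all valid plans for `π`
equals the number of non-fixed points of `π` plus the number of nontrivial cycles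
of `π`: it is a lower bound on the length of every valid plan and is attained. -/
theorem min_pick_n_swaps (α : Type*) [Fintype α] [DecidableEq α] (π : Equiv.Perm α) :
    IsLeast {N : ℕ | ∃ plan : List α, ValidPlan π plan ∧ plan.length = N}
      (π.support.card + Multiset.card π.cycleType) := by
  constructor
  · obtain ⟨L, hL1, hL2⟩ := PNSProof.upper (π.support.card + Multiset.card π.cycleType)
      (Equiv.optionCongr π) (by rw [PNSProof.phi_optionCongr]; push_cast; ring)
    exact ⟨L, (PNSProof.validPlan_iff π L).mpr hL1, hL2⟩
  · rintro N ⟨plan, hv, rfl⟩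
    have h := PNSProof.lower plan (Equiv.optionCongr π) ((PNSProof.validPlan_iff π plan).mp hv)
    rw [PNSProof.phi_optionCongr] at h
    exact_mod_cast h
end

section
/- For every m ≥ 1 and every permutation π of Fin m, every valid plan for π in the one-dimensional pick-n-swap model has total end-effector travel at least Σ_{i : Fin m} |(π⁻¹ i : ℕ) − (i : ℕ)|, i.e., the sum over all items of the distance between the item's initial cell and its goal cell. -/
/-- Total end-effector travel of a 1D plan `p₁, …, p_N`: the sum of
`|p_{j+1} - p_j|` for `j = 0, …, N`, where `p₀ = p_{N+1} = 0` is the rest position. -/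
def travel1D {m : ℕ} (hm : 0 < m) (plan : List (Fin m)) : ℤ :=
  ((((⟨0, hm⟩ : Fin m) :: plan).zip (plan ++ [(⟨0, hm⟩ : Fin m)])).map
    (fun pq => |((pq.1 : ℕ) : ℤ) - ((pq.2 : ℕ) : ℤ)|)).sum

namespace PnsAux

variable {m : ℕ}

/-- cost of an optional item relative to position `p`. -/
def cost (p : Fin m) : Option (Fin m) → ℤ
  | none => 0
  | some i => |((p : ℕ) : ℤ) - ((i : ℕ) : ℤ)|

/-- Potential: total distance of items from their goal cells, with gripper at `p`. -/
def Phi (st : (Fin m → Option (Fin m)) × Option (Fin m)) (p : Fin m) : ℤ :=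
  (∑ ℓ, cost ℓ (st.1 ℓ)) + cost p st.2

lemma cost_triangle (p q : Fin m) (o : Option (Fin m)) :
    cost q o ≤ cost p o + |((p : ℕ) : ℤ) - ((q : ℕ) : ℤ)| := by
  cases o with
  | none => simp [cost]
  | some i =>
    simp only [cost]
    have h := abs_sub_le ((q : ℕ) : ℤ) ((p : ℕ) : ℤ) ((i : ℕ) : ℤ)
    rw [abs_sub_comm ((q : ℕ) : ℤ) ((p : ℕ) : ℤ)] at h
    linarith

lemma phi_step (st : (Fin m → Option (Fin m)) × Option (Fin m)) (ℓ p : Fin m) :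
    Phi st p ≤ Phi (pnsStep st ℓ) ℓ + |((p : ℕ) : ℤ) - ((ℓ : ℕ) : ℤ)| := by
  obtain ⟨a, h⟩ := st
  have hsum : (∑ x, cost x (Function.update a ℓ h x))
      = (∑ x, cost x (a x)) + (cost ℓ h - cost ℓ (a ℓ)) := by
    have key : ∀ x, cost x (Function.update a ℓ h x)
        = cost x (a x) + (if x = ℓ then cost ℓ h - cost ℓ (a ℓ) else 0) := by
      intro x
      by_cases hx : x = ℓ
      · subst hx; simp [Function.update_self]
      · simp [Function.update_of_ne hx, hx]
    simp [key, Finset.sum_add_distrib, Finset.sum_ite_eq']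
  have htr := cost_triangle ℓ p h
  rw [abs_sub_comm] at htr
  simp only [Phi, pnsStep]
  rw [hsum]
  linarith

def trav : Fin m → List (Fin m) → ℤ
  | _, [] => 0
  | p, ℓ :: rest => |((p : ℕ) : ℤ) - ((ℓ : ℕ) : ℤ)| + trav ℓ rest

def lastP : Fin m → List (Fin m) → Fin m
  | p, [] => p
  | _, ℓ :: rest => lastP ℓ rest

lemma phi_le (plan : List (Fin m)) :
    ∀ (st : (Fin m → Option (Fin m)) × Option (Fin m)) (p : Fin m),
    Phi st p ≤ trav p plan + Phi (pnsExec st plan) (lastP p plan) := by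
  induction plan with
  | nil => intro st p; simp [trav, lastP, pnsExec]
  | cons ℓ rest ih =>
    intro st p
    have h1 := phi_step st ℓ p
    have h2 := ih (pnsStep st ℓ) ℓ
    simp only [pnsExec, List.foldl_cons] at h2 ⊢
    simp only [trav, lastP]
    linarith

lemma zipsum (z : Fin m) (plan : List (Fin m)) :
    ∀ (p : Fin m),
    (((p :: plan).zip (plan ++ [z])).map
      (fun pq => |((pq.1 : ℕ) : ℤ) - ((pq.2 : ℕ) : ℤ)|)).sum
    = trav p plan + |((lastP p plan : ℕ) : ℤ) - ((z : ℕ) : ℤ)| := by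
  induction plan with
  | nil => intro p; simp [trav, lastP]
  | cons ℓ rest ih =>
    intro p
    simp only [List.cons_append, List.zip_cons_cons, List.map_cons, List.sum_cons,
      trav, lastP, ih ℓ]
    ring

end PnsAux

/-- Every valid plan for `π` in the one-dimensional pick-n-swap model has total
end-effector travel at least `Σ_i |π⁻¹ i − i|`. -/
theorem travel_lower_bound_1D {m : ℕ} (hm : 0 < m) (π : Equiv.Perm (Fin m))
    (plan : List (Fin m)) (hplan : ValidPlan π plan) :
    (∑ i : Fin m, |(((π⁻¹ i : Fin m) : ℕ) : ℤ) - ((i : ℕ) : ℤ)|) ≤ travel1D hm plan := by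
  classical
  open PnsAux in
  set z : Fin m := ⟨0, hm⟩
  have hPhi := PnsAux.phi_le plan (fun i => some (π i), none) z
  rw [hplan] at hPhi
  have hfin : PnsAux.Phi ((fun i => some i, none) :
      (Fin m → Option (Fin m)) × Option (Fin m)) (PnsAux.lastP z plan) = 0 := by
    simp [PnsAux.Phi, PnsAux.cost]
  have hinit : PnsAux.Phi ((fun i => some (π i), none) :
      (Fin m → Option (Fin m)) × Option (Fin m)) z
      = ∑ ℓ : Fin m, |((ℓ : ℕ) : ℤ) - (((π ℓ : Fin m) : ℕ) : ℤ)| := by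
    simp [PnsAux.Phi, PnsAux.cost]
  have hre : (∑ i : Fin m, |(((π⁻¹ i : Fin m) : ℕ) : ℤ) - ((i : ℕ) : ℤ)|)
      = ∑ ℓ : Fin m, |((ℓ : ℕ) : ℤ) - (((π ℓ : Fin m) : ℕ) : ℤ)| := by
    refine (Fintype.sum_equiv π
      (fun ℓ => |((ℓ : ℕ) : ℤ) - (((π ℓ : Fin m) : ℕ) : ℤ)|)
      (fun i => |(((π⁻¹ i : Fin m) : ℕ) : ℤ) - ((i : ℕ) : ℤ)|) ?_).symm
    intro ℓ
    simp
  have htrav : travel1D hm plan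
      = PnsAux.trav z plan + |((PnsAux.lastP z plan : ℕ) : ℤ) - ((z : ℕ) : ℤ)| := by
    simpa [travel1D] using PnsAux.zipsum z plan z
  rw [hre, ← hinit, htrav]
  have := abs_nonneg (((PnsAux.lastP z plan : ℕ) : ℤ) - ((z : ℕ) : ℤ))
  linarith [hPhi, hfin.ge, hfin.le]
end

section
/- For every m ≥ 1, the average over all permutations π of Fin m of the total displacement Σ_{i : Fin m} |(π i : ℕ) − (i : ℕ)| equals (m² − 1)/3; that is, (1/m!) · Σ_{π ∈ Equiv.Perm (Fin m)} Σ_{i : Fin m} |(π i : ℕ) − (i : ℕ)| = (m² − 1)/3 as real numbers. -/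
open Finset

lemma fiber_card_eq (m : ℕ) (i j k : Fin m) :
    (univ.filter (fun π : Equiv.Perm (Fin m) => π i = j)).card =
    (univ.filter (fun π : Equiv.Perm (Fin m) => π i = k)).card := by
  apply Finset.card_bij (fun π _ => Equiv.swap j k * π)
  · intro π hπ
    simp only [mem_filter, mem_univ, true_and] at hπ ⊢
    simp [Equiv.Perm.mul_apply, hπ]
  · intro a ha b hb h
    exact mul_left_cancel h
  · intro τ hτ
    simp only [mem_filter, mem_univ, true_and] at hτ
    refine ⟨Equiv.swap j k * τ, ?_, ?_⟩
    · simp [Equiv.Perm.mul_apply, hτ, Equiv.swap_apply_right]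
    · rw [← mul_assoc, Equiv.swap_mul_self, one_mul]

lemma fiber_card_mul (m : ℕ) (i j : Fin m) :
    (univ.filter (fun π : Equiv.Perm (Fin m) => π i = j)).card * m = m.factorial := by
  have h := Finset.card_eq_sum_card_fiberwise
    (f := fun π : Equiv.Perm (Fin m) => π i) (s := univ) (t := univ)
    (fun x _ => mem_univ _)
  have h2 : ∀ k : Fin m, (univ.filter (fun π : Equiv.Perm (Fin m) => π i = k)).card =
      (univ.filter (fun π : Equiv.Perm (Fin m) => π i = j)).card :=
    fun k => fiber_card_eq m i k j
  rw [Finset.sum_congr rfl (fun k _ => h2 k), Finset.sum_const, smul_eq_mul] at h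
  have hc : (univ : Finset (Equiv.Perm (Fin m))).card = m.factorial := by
    simp [Finset.card_univ, Fintype.card_perm]
  rw [hc] at h
  rw [mul_comm]
  simpa using h.symm

lemma sum_abs_range (n : ℕ) :
    ∑ i ∈ Finset.range n, ∑ j ∈ Finset.range n, |(i:ℝ) - j| = (n*((n:ℝ)^2-1))/3 := by
  induction n with
  | zero => simp
  | succ n ih =>
    have hid : ∑ j ∈ Finset.range n, (j : ℝ) = n * (n-1) / 2 := by
      have := Finset.sum_range_id_mul_two n
      have : (∑ j ∈ Finset.range n, (j:ℝ)) * 2 = n * (n-1) := by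
        have h2 := congrArg (fun x : ℕ => (x : ℝ)) this
        push_cast at h2
        rcases Nat.eq_zero_or_pos n with h | h
        · simp [h]
        · rw [h2]
          rw [Nat.cast_sub h]
          push_cast
          ring
      linarith
    have habs : ∀ j ∈ Finset.range n, |(n:ℝ) - j| = (n:ℝ) - j := by
      intro j hj
      rw [abs_of_nonneg]
      have := Finset.mem_range.mp hj
      have : (j : ℝ) < n := by exact_mod_cast this
      linarith
    have habs' : ∀ i ∈ Finset.range n, |(i:ℝ) - n| = (n:ℝ) - i := by
      intro i hi
      rw [abs_sub_comm]; exact habs i hi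
    rw [Finset.sum_range_succ]
    have hinner : ∀ i ∈ Finset.range n,
        ∑ j ∈ Finset.range (n+1), |(i:ℝ) - j| =
        (∑ j ∈ Finset.range n, |(i:ℝ) - j|) + ((n:ℝ) - i) := by
      intro i hi
      rw [Finset.sum_range_succ, habs' i hi]
    rw [Finset.sum_congr rfl hinner, Finset.sum_add_distrib,
      Finset.sum_range_succ, Finset.sum_congr rfl habs, ih]
    simp only [sub_self, abs_zero, add_zero]
    rw [Finset.sum_sub_distrib, Finset.sum_const, Finset.card_range, hid]
    push_cast
    ring

/-- The average over all permutations of `Fin m` of the total displacement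
`Σ_i |π i − i|` equals `(m² − 1)/3`. -/
theorem average_total_displacement (m : ℕ) (hm : 1 ≤ m) :
    (1 / (Nat.factorial m : ℝ)) *
      ∑ π : Equiv.Perm (Fin m), ∑ i : Fin m, |((π i : ℕ) : ℝ) - ((i : ℕ) : ℝ)| =
      ((m : ℝ) ^ 2 - 1) / 3 := by
  have fiber_card_mul := fiber_card_mul m
  have sum_abs_range := sum_abs_range m
  have hm0 : (m : ℝ) ≠ 0 := by
    have : 0 < m := hm
    exact_mod_cast this.ne'
  have hf0 : (m.factorial : ℝ) ≠ 0 := by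
    exact_mod_cast m.factorial_pos.ne'
  rw [Finset.sum_comm]
  have key : ∀ i : Fin m, ∑ π : Equiv.Perm (Fin m), |((π i : ℕ):ℝ) - ((i:ℕ):ℝ)| =
      ∑ j : Fin m, ((m.factorial : ℝ)/m) * |((j:ℕ):ℝ) - ((i:ℕ):ℝ)| := by
    intro i
    rw [← Finset.sum_fiberwise_of_maps_to (g := fun π : Equiv.Perm (Fin m) => π i)
      (fun x _ => mem_univ (x i))]
    apply Finset.sum_congr rfl
    intro j _
    have h1 : ∀ π ∈ univ.filter (fun π : Equiv.Perm (Fin m) => π i = j),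
        |((π i : ℕ):ℝ) - ((i:ℕ):ℝ)| = |((j:ℕ):ℝ) - ((i:ℕ):ℝ)| := by
      intro π hπ; rw [(mem_filter.mp hπ).2]
    rw [Finset.sum_congr rfl h1, Finset.sum_const, nsmul_eq_mul]
    congr 1
    have h := fiber_card_mul i j
    field_simp
    exact_mod_cast h
  rw [Finset.sum_congr rfl (fun i _ => key i)]
  simp only [← Finset.mul_sum]
  have hswap : ∑ i : Fin m, ∑ j : Fin m, |((j:ℕ):ℝ) - ((i:ℕ):ℝ)| =
      ∑ i ∈ Finset.range m, ∑ j ∈ Finset.range m, |(i:ℝ) - j| := by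
    rw [Finset.sum_comm]
    rw [Fin.sum_univ_eq_sum_range (fun i => ∑ j : Fin m, |((i:ℕ):ℝ) - ((j:ℕ):ℝ)|)]
    exact Finset.sum_congr rfl (fun i _ =>
      Fin.sum_univ_eq_sum_range (fun j => |((i:ℕ):ℝ) - ((j:ℕ):ℝ)|) m)
  rw [hswap, sum_abs_range]
  field_simp
end

section
/- For a permutation π of Fin m, let T(π) denote the minimum total end-effector travel over all valid plans for π in the one-dimensional pick-n-swap model. Then the normalized expected optimal travel converges to 1/3: lim_{m → ∞} (1/(m! · m²)) · Σ_{π ∈ Equiv.Perm (Fin m)} T(π) = 1/3. -/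
/-- `T(π)`: the minimum total end-effector travel over all valid plans for `π`. -/
noncomputable def optTravel1D {m : ℕ} (hm : 0 < m) (π : Equiv.Perm (Fin m)) : ℝ :=
  sInf {d : ℝ | ∃ plan : List (Fin m), ValidPlan π plan ∧ ((travel1D hm plan : ℤ) : ℝ) = d}

namespace PNS

variable {m : ℕ}

/-- travel cost without returning to rest, starting at (integer) position `p`. -/
def Wnr : ℤ → List (Fin m) → ℤ
  | _, [] => 0
  | p, q :: l => |p - ((q : ℕ) : ℤ)| + Wnr ((q : ℕ) : ℤ) l

/-- arm position after executing a plan, starting at `p`. -/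
def posAfter : ℤ → List (Fin m) → ℤ
  | p, [] => p
  | _, q :: l => posAfter ((q : ℕ) : ℤ) l

@[simp] lemma Wnr_nil (p : ℤ) : Wnr (m := m) p [] = 0 := rfl
@[simp] lemma Wnr_cons (p : ℤ) (q : Fin m) (l : List (Fin m)) :
    Wnr p (q :: l) = |p - ((q : ℕ) : ℤ)| + Wnr ((q : ℕ) : ℤ) l := rfl
@[simp] lemma posAfter_nil (p : ℤ) : posAfter (m := m) p [] = p := rfl
@[simp] lemma posAfter_cons (p : ℤ) (q : Fin m) (l : List (Fin m)) :
    posAfter p (q :: l) = posAfter ((q : ℕ) : ℤ) l := rfl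

lemma Wnr_nonneg (p : ℤ) (l : List (Fin m)) : 0 ≤ Wnr p l := by
  induction l generalizing p with
  | nil => simp
  | cons q t ih => simpa using add_nonneg (abs_nonneg _) (ih _)

lemma travel_eq_Wnr (hm : 0 < m) (plan : List (Fin m)) :
    travel1D hm plan = Wnr 0 plan + |posAfter 0 plan| := by
  have key : ∀ (l : List (Fin m)) (s : Fin m),
      (((s :: l).zip (l ++ [(⟨0, hm⟩ : Fin m)])).map
        (fun pq => |((pq.1 : ℕ) : ℤ) - ((pq.2 : ℕ) : ℤ)|)).sum
      = Wnr ((s : ℕ) : ℤ) l + |posAfter ((s : ℕ) : ℤ) l| := by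
    intro l
    induction l with
    | nil => intro s; simp [List.zip]
    | cons q t ih =>
      intro s
      simp only [List.cons_append, List.zip_cons_cons, List.map_cons, List.sum_cons,
        Wnr_cons, posAfter_cons, ih q]
      ring
  simpa [travel1D] using key plan ⟨0, hm⟩

lemma posAfter_bounds (l : List (Fin m)) (p : ℤ) (h0 : 0 ≤ p) (h1 : p ≤ (m : ℤ) - 1) :
    0 ≤ posAfter p l ∧ posAfter p l ≤ (m : ℤ) - 1 := by
  induction l generalizing p with
  | nil => exact ⟨h0, h1⟩
  | cons q t ih =>
    refine ih _ (by positivity) ?_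
    have := q.isLt
    omega

lemma Wnr_append (l₁ l₂ : List (Fin m)) (q : ℤ) (e : Fin m)
    (h : l₁.getLast? = some e) :
    Wnr q (l₁ ++ l₂) = Wnr q l₁ + Wnr ((e : ℕ) : ℤ) l₂ := by
  induction l₁ generalizing q with
  | nil => simp at h
  | cons a t ih =>
    cases t with
    | nil =>
      simp only [List.getLast?_singleton, Option.some.injEq] at h
      subst h
      simp [add_assoc]
    | cons b t' =>
      have h' : (b :: t').getLast? = some e := by
        simpa [List.getLast?_cons_cons] using h
      rw [List.cons_append, Wnr_cons, ih _ h']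
      simp only [Wnr_cons]
      ring

/-- lower-bound potential -/
noncomputable def phi (st : (Fin m → Option (Fin m)) × Option (Fin m)) (p : ℤ) : ℤ :=
  (∑ c : Fin m, (match st.1 c with
    | some j => |((c : ℕ) : ℤ) - ((j : ℕ) : ℤ)|
    | none => 0)) +
  (match st.2 with
    | some j => |p - ((j : ℕ) : ℤ)|
    | none => 0)

/-- total displacement of π -/
def LS (π : Equiv.Perm (Fin m)) : ℤ := ∑ i : Fin m, |((i : ℕ) : ℤ) - ((π i : ℕ) : ℤ)|

lemma LS_nonneg (π : Equiv.Perm (Fin m)) : 0 ≤ LS π :=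
  Finset.sum_nonneg fun _ _ => abs_nonneg _

@[simp] lemma LS_one : LS (1 : Equiv.Perm (Fin m)) = 0 := by simp [LS]

lemma phi_init (π : Equiv.Perm (Fin m)) (p : ℤ) :
    phi (fun i => some (π i), none) p = LS π := by
  simp [phi, LS]

lemma phi_goal (p : ℤ) :
    phi ((fun i => some i, none) : (Fin m → Option (Fin m)) × Option (Fin m)) p = 0 := by
  simp [phi]

lemma phi_step (st : (Fin m → Option (Fin m)) × Option (Fin m)) (q : Fin m) :
    phi (pnsStep st q) ((q : ℕ) : ℤ) = phi st ((q : ℕ) : ℤ) := by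
  obtain ⟨a, h⟩ := st
  classical
  set g : Fin m → Option (Fin m) → ℤ := fun c o =>
    (match o with
      | some j => |((c : ℕ) : ℤ) - ((j : ℕ) : ℤ)|
      | none => 0) with hg
  have hfun : (fun c => g c (Function.update a q h c)) =
      Function.update (fun c => g c (a c)) q (g q h) := by
    funext c
    by_cases hc : c = q
    · subst hc; simp
    · simp [Function.update_of_ne hc]
  have hsum : ∑ c : Fin m, g c (Function.update a q h c)
      = g q h + ∑ c ∈ Finset.univ \ {q}, g c (a c) := by
    rw [show (∑ c : Fin m, g c (Function.update a q h c))
        = ∑ c : Fin m, Function.update (fun c => g c (a c)) q (g q h) c by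
          rw [hfun]]
    exact Finset.sum_update_of_mem (Finset.mem_univ q) _ _
  have hsum2 : ∑ c : Fin m, g c (a c)
      = g q (a q) + ∑ c ∈ Finset.univ \ {q}, g c (a c) := by
    have := Finset.sum_update_of_mem (Finset.mem_univ q) (fun c => g c (a c)) (g q (a q))
    simpa [Function.update_eq_self] using this
  have habs : ∀ o : Option (Fin m),
      (match o with
        | some j => |((q : ℕ) : ℤ) - ((j : ℕ) : ℤ)|
        | none => 0) = g q o := fun o => rfl
  simp only [phi, pnsStep]
  rw [hsum, hsum2, habs h, habs (a q)]
  ring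

lemma phi_move (st : (Fin m → Option (Fin m)) × Option (Fin m)) (p q : ℤ) :
    phi st p ≤ |p - q| + phi st q := by
  obtain ⟨a, h⟩ := st
  simp only [phi]
  cases h with
  | none => simp [abs_nonneg]
  | some j =>
    have : |p - ((j : ℕ) : ℤ)| ≤ |p - q| + |q - ((j : ℕ) : ℤ)| := abs_sub_le _ _ _
    simp only []
    linarith

lemma phi_le_Wnr (plan : List (Fin m)) (st : (Fin m → Option (Fin m)) × Option (Fin m))
    (p : ℤ) :
    phi st p ≤ Wnr p plan + phi (pnsExec st plan) (posAfter p plan) := by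
  induction plan generalizing st p with
  | nil => simp [pnsExec]
  | cons q l ih =>
    have h1 : phi st p ≤ |p - ((q:ℕ):ℤ)| + phi st ((q:ℕ):ℤ) := phi_move st p _
    have h2 : phi st ((q:ℕ):ℤ) = phi (pnsStep st q) ((q:ℕ):ℤ) := (phi_step st q).symm
    have h3 := ih (pnsStep st q) ((q:ℕ):ℤ)
    have hexec : pnsExec st (q :: l) = pnsExec (pnsStep st q) l := rfl
    simp only [Wnr_cons, posAfter_cons, hexec]
    linarith

/-- Lower bound: every valid plan travels at least `LS π`. -/
lemma LS_le_travel (hm : 0 < m) (π : Equiv.Perm (Fin m)) (plan : List (Fin m))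
    (hv : ValidPlan π plan) : LS π ≤ travel1D hm plan := by
  have h := phi_le_Wnr plan (fun i => some (π i), none) 0
  rw [phi_init, hv, phi_goal] at h
  rw [travel_eq_Wnr hm]
  have := abs_nonneg (posAfter (m := m) 0 plan)
  linarith

end PNS

namespace PNS

variable {m : ℕ}

open Equiv

def innerPlan (i : Fin m) : Equiv.Perm (Fin m) → ℕ → List (Fin m)
  | _, 0 => []
  | ρ, fuel+1 => if ρ i = i then [i] else ρ i :: innerPlan i (ρ * Equiv.swap i (ρ i)) fuel

def cycRes (i : Fin m) : Equiv.Perm (Fin m) → ℕ → Equiv.Perm (Fin m)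
  | ρ, 0 => ρ
  | ρ, fuel+1 => if ρ i = i then ρ else cycRes i (ρ * Equiv.swap i (ρ i)) fuel

def mkPlan : Equiv.Perm (Fin m) → List (Fin m) → List (Fin m)
  | _, [] => []
  | ρ, c :: rest => if ρ c = c then mkPlan ρ rest
      else (c :: innerPlan c ρ (m+1)) ++ mkPlan (cycRes c ρ (m+1)) rest

lemma swap_supp (ρ : Equiv.Perm (Fin m)) (i : Fin m) (hne : ρ i ≠ i) :
    (ρ * Equiv.swap i (ρ i)).support ⊆ ρ.support \ {ρ i} := by
  intro x hx
  rw [Equiv.Perm.mem_support] at hx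
  simp only [Finset.mem_sdiff, Finset.mem_singleton, Equiv.Perm.mem_support]
  constructor
  · intro hfix
    apply hx
    by_cases h1 : x = i
    · subst h1; exact absurd hfix hne
    by_cases h2 : x = ρ i
    · subst h2
      simp [Equiv.Perm.mul_apply, Equiv.swap_apply_right]
    · simp [Equiv.Perm.mul_apply, Equiv.swap_apply_of_ne_of_ne h1 h2, hfix]
  · intro h2
    apply hx
    subst h2
    simp [Equiv.Perm.mul_apply, Equiv.swap_apply_right]

lemma swap_supp_card (ρ : Equiv.Perm (Fin m)) (i : Fin m) (hne : ρ i ≠ i) :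
    (ρ * Equiv.swap i (ρ i)).support.card < ρ.support.card := by
  have h1 : ρ (ρ i) ≠ ρ i := fun h => hne (ρ.injective h)
  have hmem : ρ i ∈ ρ.support := Equiv.Perm.mem_support.mpr h1
  calc (ρ * Equiv.swap i (ρ i)).support.card
      ≤ (ρ.support \ {ρ i}).card := Finset.card_le_card (swap_supp ρ i hne)
    _ < ρ.support.card := by
        apply Finset.card_lt_card
        constructor
        · exact Finset.sdiff_subset
        · intro hsub
          have := hsub hmem
          simp at this

lemma LS_swap (ρ : Equiv.Perm (Fin m)) (i : Fin m) (hne : ρ i ≠ i) :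
    LS (ρ * Equiv.swap i (ρ i)) = LS ρ
      + |((i:ℕ):ℤ) - ((ρ (ρ i) : ℕ):ℤ)|
      - |((i:ℕ):ℤ) - ((ρ i : ℕ):ℤ)| - |((ρ i:ℕ):ℤ) - ((ρ (ρ i) : ℕ):ℤ)| := by
  classical
  set f : Fin m → ℤ := fun c => |((c:ℕ):ℤ) - ((ρ c : ℕ):ℤ)| with hf
  set f' : Fin m → ℤ := fun c => |((c:ℕ):ℤ) - (((ρ * Equiv.swap i (ρ i)) c : ℕ):ℤ)| with hf'
  have hff' : f' = Function.update (Function.update f i (|((i:ℕ):ℤ) - ((ρ (ρ i) : ℕ):ℤ)|)) (ρ i) 0 := by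
    funext c
    by_cases h2 : c = ρ i
    · subst h2
      simp [f', Equiv.Perm.mul_apply, Equiv.swap_apply_right]
    by_cases h1 : c = i
    · subst h1
      simp [f', Function.update_of_ne (Ne.symm hne), Equiv.Perm.mul_apply, Equiv.swap_apply_left]
    · simp [f', Function.update_of_ne h2, Function.update_of_ne h1, f,
        Equiv.Perm.mul_apply, Equiv.swap_apply_of_ne_of_ne h1 h2]
  have key : ∀ (g : Fin m → ℤ) (a b : Fin m), a ≠ b → ∀ (va vb : ℤ),
      ∑ c : Fin m, Function.update (Function.update g a va) b vb c
        = va + vb + ∑ c ∈ (Finset.univ \ {b}) \ {a}, g c := by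
    intro g a b hab va vb
    rw [Finset.sum_update_of_mem (Finset.mem_univ b)]
    have ha : a ∈ Finset.univ \ ({b} : Finset (Fin m)) := by simp [hab]
    rw [Finset.sum_update_of_mem ha]
    ring
  have hLS' : LS (ρ * Equiv.swap i (ρ i)) = ∑ c : Fin m, f' c := rfl
  have hLS : LS ρ = ∑ c : Fin m, f c := rfl
  have hsplit : ∑ c : Fin m, f c
      = f i + f (ρ i) + ∑ c ∈ (Finset.univ \ {ρ i}) \ {i}, f c := by
    have : (fun c => f c) = Function.update (Function.update f i (f i)) (ρ i) (f (ρ i)) := by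
      funext c
      by_cases h2 : c = ρ i
      · subst h2; simp
      by_cases h1 : c = i
      · subst h1; simp [Function.update_of_ne (Ne.symm hne)]
      · simp [Function.update_of_ne h2, Function.update_of_ne h1]
    calc ∑ c : Fin m, f c
        = ∑ c : Fin m, Function.update (Function.update f i (f i)) (ρ i) (f (ρ i)) c := by
          conv_lhs => rw [this]
      _ = f i + f (ρ i) + ∑ c ∈ (Finset.univ \ {ρ i}) \ {i}, f c :=
          key f i (ρ i) (Ne.symm hne) _ _
  rw [hLS', hff', key f i (ρ i) (Ne.symm hne) _ _, hLS, hsplit]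
  have hfi : f i = |((i:ℕ):ℤ) - ((ρ i : ℕ):ℤ)| := rfl
  have hfri : f (ρ i) = |((ρ i:ℕ):ℤ) - ((ρ (ρ i) : ℕ):ℤ)| := rfl
  rw [hfi, hfri]
  ring

lemma inner_main : ∀ (fuel : ℕ) (ρ : Equiv.Perm (Fin m)) (i : Fin m),
    ρ.support.card < fuel →
    (pnsExec (Function.update (fun c => some (ρ c)) i none, some (ρ i)) (innerPlan i ρ fuel)
       = (fun c => some (cycRes i ρ fuel c), none))
    ∧ (cycRes i ρ fuel) i = i
    ∧ (cycRes i ρ fuel).support ⊆ ρ.support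
    ∧ ((innerPlan i ρ fuel).getLast? = some i)
    ∧ ∀ p : ℤ, Wnr p (innerPlan i ρ fuel) ≤ |p - ((ρ i : ℕ):ℤ)| + LS ρ
        - |((ρ i : ℕ):ℤ) - ((i : ℕ):ℤ)| - LS (cycRes i ρ fuel) := by
  intro fuel
  induction fuel with
  | zero => intro ρ i h; omega
  | succ fuel ih =>
    intro ρ i h
    by_cases hfix : ρ i = i
    · simp only [innerPlan, cycRes, if_pos hfix]
      refine ⟨?_, hfix, subset_rfl, rfl, ?_⟩
      · show pnsStep (Function.update (fun c => some (ρ c)) i none, some (ρ i)) i = _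
        simp only [pnsStep, Function.update_idem, Function.update_self]
        rw [Prod.mk.injEq]
        constructor
        · funext c
          by_cases hc : c = i
          · subst hc; simp [hfix]
          · simp [Function.update_of_ne hc]
        · rfl
      · intro p
        rw [hfix]
        simp [Wnr]
    · have hcard : (ρ * Equiv.swap i (ρ i)).support.card < fuel := by
        have := swap_supp_card ρ i hfix
        omega
      obtain ⟨hexec, hfixi, hsupp, hlast, hcost⟩ := ih (ρ * Equiv.swap i (ρ i)) i hcard
      have hstep : pnsStep (Function.update (fun c => some (ρ c)) i none, some (ρ i)) (ρ i)
          = (Function.update (fun c => some ((ρ * Equiv.swap i (ρ i)) c)) i none,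
             some ((ρ * Equiv.swap i (ρ i)) i)) := by
        simp only [pnsStep]
        rw [Prod.mk.injEq]
        constructor
        · funext c
          by_cases h2 : c = ρ i
          · subst h2
            simp [Function.update_of_ne hfix, Function.update_self,
              Function.update_of_ne (Ne.symm hfix),
              Equiv.Perm.mul_apply, Equiv.swap_apply_right]
          by_cases h1 : c = i
          · subst h1
            simp [Function.update_of_ne (Ne.symm hfix), Function.update_self]
          · simp [Function.update_of_ne h1, Function.update_of_ne h2,
              Equiv.Perm.mul_apply, Equiv.swap_apply_of_ne_of_ne h1 h2]
        · simp [Function.update_of_ne hfix, Equiv.Perm.mul_apply, Equiv.swap_apply_left]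
      simp only [innerPlan, cycRes, if_neg hfix]
      refine ⟨?_, hfixi, hsupp.trans ((swap_supp ρ i hfix).trans Finset.sdiff_subset), ?_, ?_⟩
      · show pnsExec (pnsStep _ (ρ i)) (innerPlan i (ρ * Equiv.swap i (ρ i)) fuel) = _
        rw [hstep]
        exact hexec
      · exact Option.mem_def.mp (List.mem_getLast?_cons (Option.mem_def.mpr hlast))
      · intro p
        have h1 := hcost ((ρ i : ℕ):ℤ)
        have h2 := LS_swap ρ i hfix
        have h3 : ((ρ * Equiv.swap i (ρ i)) i) = ρ (ρ i) := by
          simp [Equiv.Perm.mul_apply, Equiv.swap_apply_left]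
        rw [h3] at h1
        simp only [Wnr_cons]
        have habs1 : |((ρ i:ℕ):ℤ) - ((ρ (ρ i):ℕ):ℤ)| = |((ρ (ρ i):ℕ):ℤ) - ((ρ i:ℕ):ℤ)| :=
          abs_sub_comm _ _
        have habs2 : |((i:ℕ):ℤ) - ((ρ (ρ i):ℕ):ℤ)| = |((ρ (ρ i):ℕ):ℤ) - ((i:ℕ):ℤ)| :=
          abs_sub_comm _ _
        have habs3 : |((i:ℕ):ℤ) - ((ρ i:ℕ):ℤ)| = |((ρ i:ℕ):ℤ) - ((i:ℕ):ℤ)| :=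
          abs_sub_comm _ _
        linarith

end PNS

namespace PNS

variable {m : ℕ}

lemma supp_card_lt (ρ : Equiv.Perm (Fin m)) : ρ.support.card < m + 1 := by
  have : ρ.support.card ≤ m := by
    simpa using Finset.card_le_card (Finset.subset_univ ρ.support)
  omega

lemma outer_main : ∀ (l : List (Fin m)) (ρ : Equiv.Perm (Fin m)),
    (∀ c, ρ c ≠ c → c ∈ l) → l.Pairwise (· ≤ ·) →
    (pnsExec (fun c => some (ρ c), none) (mkPlan ρ l) = (fun c => some c, none))
    ∧ ∀ p : ℤ, 0 ≤ p → p ≤ (m : ℤ) - 1 → (∀ c ∈ l, p ≤ ((c : ℕ) : ℤ)) →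
        Wnr p (mkPlan ρ l) ≤ LS ρ + ((m : ℤ) - 1 - p) := by
  intro l
  induction l with
  | nil =>
    intro ρ hall _
    have hρ : ρ = 1 := by
      ext c
      by_contra hc
      exact absurd (hall c (fun h => hc (by simp [h]))) (by simp)
    subst hρ
    constructor
    · simp [pnsExec, mkPlan]
    · intro p h0 h1 _
      simp only [mkPlan, Wnr_nil, LS_one]
      linarith
  | cons c rest ih =>
    intro ρ hall hsort
    have hsort' : rest.Pairwise (· ≤ ·) := hsort.of_cons
    by_cases hfix : ρ c = c
    · have hall' : ∀ c', ρ c' ≠ c' → c' ∈ rest := by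
        intro c' hc'
        rcases List.mem_cons.mp (hall c' hc') with h | h
        · exact absurd (by rw [h]; exact hfix) hc'
        · exact h
      obtain ⟨hex, hcost⟩ := ih ρ hall' hsort'
      rw [mkPlan, if_pos hfix]
      exact ⟨hex, fun p h0 h1 hp => hcost p h0 h1 (fun c' hc' => hp c' (List.mem_cons_of_mem c hc'))⟩
    · obtain ⟨hexec, hfixi, hsupp, hlast, hcostin⟩ :=
        inner_main (m + 1) ρ c (supp_card_lt ρ)
      set ρ₂ := cycRes c ρ (m+1) with hρ₂
      have hall₂ : ∀ c', ρ₂ c' ≠ c' → c' ∈ rest := by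
        intro c' hc'
        have hs : c' ∈ ρ₂.support := Equiv.Perm.mem_support.mpr hc'
        have hs' : c' ∈ ρ.support := hsupp hs
        have : c' ∈ c :: rest := hall c' (Equiv.Perm.mem_support.mp hs')
        have hne : c' ≠ c := by
          intro h; exact hc' (by rw [h]; exact hfixi)
        rcases List.mem_cons.mp this with h | h
        · exact absurd h hne
        · exact h
      obtain ⟨hex₂, hcost₂⟩ := ih ρ₂ hall₂ hsort'
      rw [mkPlan, if_neg hfix]
      have hstep0 : pnsStep ((fun c => some (ρ c)), none) c
          = (Function.update (fun c => some (ρ c)) c none, some (ρ c)) := rfl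
      constructor
      · rw [show ((c :: innerPlan c ρ (m+1)) ++ mkPlan ρ₂ rest)
            = c :: (innerPlan c ρ (m+1) ++ mkPlan ρ₂ rest) from rfl]
        show pnsExec (pnsStep _ c) _ = _
        rw [hstep0]
        show pnsExec _ (innerPlan c ρ (m+1) ++ mkPlan ρ₂ rest) = _
        rw [pnsExec, List.foldl_append]
        rw [show (innerPlan c ρ (m + 1)).foldl pnsStep
              (Function.update (fun c => some (ρ c)) c none, some (ρ c))
            = pnsExec (Function.update (fun c => some (ρ c)) c none, some (ρ c))
                (innerPlan c ρ (m+1)) from rfl, hexec]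
        exact hex₂
      · intro p h0 h1 hp
        have hpc : p ≤ ((c : ℕ) : ℤ) := hp c (List.mem_cons_self)
        have hcb : ((c : ℕ) : ℤ) ≤ (m : ℤ) - 1 := by
          have := c.isLt; omega
        have hwa : Wnr p ((c :: innerPlan c ρ (m+1)) ++ mkPlan ρ₂ rest)
            = Wnr p (c :: innerPlan c ρ (m+1)) + Wnr ((c : ℕ) : ℤ) (mkPlan ρ₂ rest) := by
          apply Wnr_append
          exact Option.mem_def.mp (List.mem_getLast?_cons (Option.mem_def.mpr hlast))
        rw [hwa]
        have h1' := hcostin ((c : ℕ) : ℤ)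
        have h2' := hcost₂ ((c : ℕ) : ℤ) (by positivity) hcb
          (fun c' hc' => by
            have hle := (List.pairwise_cons.mp hsort).1 c' hc'
            rw [Fin.le_def] at hle
            exact_mod_cast hle)
        have habs : |((c:ℕ):ℤ) - ((ρ c : ℕ):ℤ)| = |((ρ c : ℕ):ℤ) - ((c:ℕ):ℤ)| :=
          abs_sub_comm _ _
        have habs2 : |p - ((c:ℕ):ℤ)| = ((c:ℕ):ℤ) - p := by
          rw [abs_of_nonpos (by linarith)]; ring
        simp only [Wnr_cons]
        linarith
  
theorem mkPlan_valid (π : Equiv.Perm (Fin m)) :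
    ValidPlan π (mkPlan π (List.finRange m)) := by
  have h := outer_main (List.finRange m) π (fun c _ => List.mem_finRange c)
    (List.pairwise_le_finRange m)
  exact h.1

theorem mkPlan_travel (hm : 0 < m) (π : Equiv.Perm (Fin m)) :
    travel1D hm (mkPlan π (List.finRange m)) ≤ LS π + 2 * ((m : ℤ) - 1) := by
  have hm1 : (1:ℤ) ≤ (m:ℤ) := by exact_mod_cast hm
  have h := outer_main (List.finRange m) π (fun c _ => List.mem_finRange c)
    (List.pairwise_le_finRange m)
  have hcost := h.2 0 le_rfl (by linarith) (fun c _ => by positivity)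
  rw [travel_eq_Wnr hm]
  have hpos := posAfter_bounds (mkPlan π (List.finRange m)) 0 le_rfl (by linarith)
  have : |posAfter (0:ℤ) (mkPlan π (List.finRange m))| ≤ (m:ℤ) - 1 := by
    rw [abs_of_nonneg hpos.1]; exact hpos.2
  linarith

end PNS

namespace PNS

variable {m : ℕ}

lemma travel_nonneg (hm : 0 < m) (plan : List (Fin m)) : 0 ≤ travel1D hm plan := by
  rw [travel_eq_Wnr hm]
  exact add_nonneg (Wnr_nonneg _ _) (abs_nonneg _)

lemma opt_lower (hm : 0 < m) (π : Equiv.Perm (Fin m)) :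
    ((LS π : ℤ) : ℝ) ≤ optTravel1D hm π := by
  apply le_csInf
  · exact ⟨_, mkPlan π (List.finRange m), mkPlan_valid π, rfl⟩
  · rintro d ⟨plan, hv, rfl⟩
    exact_mod_cast LS_le_travel hm π plan hv

lemma opt_upper (hm : 0 < m) (π : Equiv.Perm (Fin m)) :
    optTravel1D hm π ≤ ((LS π : ℤ) : ℝ) + 2 * ((m : ℝ) - 1) := by
  have hb : BddBelow {d : ℝ | ∃ plan : List (Fin m), ValidPlan π plan ∧
      ((travel1D hm plan : ℤ) : ℝ) = d} := by
    refine ⟨0, ?_⟩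
    rintro d ⟨plan, hv, rfl⟩
    exact_mod_cast travel_nonneg hm plan
  have hmem : ((travel1D hm (mkPlan π (List.finRange m)) : ℤ) : ℝ) ∈
      {d : ℝ | ∃ plan : List (Fin m), ValidPlan π plan ∧ ((travel1D hm plan : ℤ) : ℝ) = d} :=
    ⟨mkPlan π (List.finRange m), mkPlan_valid π, rfl⟩
  refine (csInf_le hb hmem).trans ?_
  have := mkPlan_travel hm π
  have h2 : ((travel1D hm (mkPlan π (List.finRange m)) : ℤ) : ℝ)
      ≤ ((LS π + 2 * ((m : ℤ) - 1) : ℤ) : ℝ) := by exact_mod_cast this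
  refine h2.trans ?_
  push_cast
  ring_nf
  exact le_refl _

/-- sum over all permutations of total displacement -/
lemma sum_LS (n : ℕ) :
    ∑ π : Equiv.Perm (Fin (n+1)), LS π
      = (n.factorial : ℤ) * ∑ i : Fin (n+1), ∑ j : Fin (n+1), |((i:ℕ):ℤ) - ((j:ℕ):ℤ)| := by
  classical
  rw [show (∑ π : Equiv.Perm (Fin (n+1)), LS π)
      = ∑ π : Equiv.Perm (Fin (n+1)), ∑ i : Fin (n+1), |((i:ℕ):ℤ) - ((π i:ℕ):ℤ)| from rfl,
    Finset.sum_comm]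
  rw [Finset.mul_sum]
  apply Finset.sum_congr rfl
  intro i _
  have step1 : ∑ π : Equiv.Perm (Fin (n+1)), |((i:ℕ):ℤ) - ((π i:ℕ):ℤ)|
      = ∑ τ : Equiv.Perm (Fin (n+1)), |((i:ℕ):ℤ) - ((τ 0:ℕ):ℤ)| := by
    rw [← Equiv.sum_comp (Equiv.mulRight (Equiv.swap (0 : Fin (n+1)) i))
      (fun τ => |((i:ℕ):ℤ) - ((τ 0:ℕ):ℤ)|)]
    apply Finset.sum_congr rfl
    intro π _
    simp [Equiv.Perm.mul_apply, Equiv.swap_apply_left]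
  rw [step1]
  rw [← Equiv.sum_comp Equiv.Perm.decomposeFin.symm
    (fun τ : Equiv.Perm (Fin (n+1)) => |((i:ℕ):ℤ) - ((τ 0:ℕ):ℤ)|)]
  rw [Fintype.sum_prod_type]
  have : ∀ p : Fin (n+1), ∀ e : Equiv.Perm (Fin n),
      |((i:ℕ):ℤ) - (((Equiv.Perm.decomposeFin.symm (p, e)) 0 : Fin (n+1)) : ℕ)|
        = |((i:ℕ):ℤ) - ((p:ℕ):ℤ)| := by
    intro p e
    rw [Equiv.Perm.decomposeFin_symm_apply_zero]
  calc ∑ p : Fin (n+1), ∑ e : Equiv.Perm (Fin n),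
        |((i:ℕ):ℤ) - (((Equiv.Perm.decomposeFin.symm (p, e)) 0 : Fin (n+1)) : ℕ)|
      = ∑ p : Fin (n+1), ∑ _e : Equiv.Perm (Fin n), |((i:ℕ):ℤ) - ((p:ℕ):ℤ)| := by
        apply Finset.sum_congr rfl; intro p _; apply Finset.sum_congr rfl; intro e _
        exact this p e
    _ = ∑ p : Fin (n+1), (n.factorial : ℤ) * |((i:ℕ):ℤ) - ((p:ℕ):ℤ)| := by
        apply Finset.sum_congr rfl; intro p _
        rw [Finset.sum_const, Finset.card_univ, Fintype.card_perm, Fintype.card_fin,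
          nsmul_eq_mul]
    _ = (n.factorial : ℤ) * ∑ j : Fin (n+1), |((i:ℕ):ℤ) - ((j:ℕ):ℤ)| := by
        rw [Finset.mul_sum]

lemma sum_abs_range (k : ℕ) :
    (∑ i ∈ Finset.range k, ∑ j ∈ Finset.range k, |(i:ℤ) - (j:ℤ)|) * 3
      = (k:ℤ)^3 - (k:ℤ) := by
  induction k with
  | zero => simp
  | succ k ih =>
    have hgauss : (∑ i ∈ Finset.range k, (i:ℤ)) * 2 = (k:ℤ) * ((k:ℤ) - 1) := by
      have := Finset.sum_range_id_mul_two k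
      have hcast : ((∑ i ∈ Finset.range k, i) * 2 : ℤ) = ((k * (k-1) : ℕ) : ℤ) := by
        exact_mod_cast congrArg (Nat.cast : ℕ → ℤ) this
      push_cast at hcast
      rcases Nat.eq_zero_or_pos k with hk | hk
      · subst hk; simp
      · have : ((k - 1 : ℕ) : ℤ) = (k : ℤ) - 1 := by
          have : 1 ≤ k := hk
          omega
        rw [this] at hcast
        linarith [hcast]
    have expand : ∑ i ∈ Finset.range (k+1), ∑ j ∈ Finset.range (k+1), |(i:ℤ) - (j:ℤ)|
        = (∑ i ∈ Finset.range k, ∑ j ∈ Finset.range k, |(i:ℤ) - (j:ℤ)|)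
          + (∑ i ∈ Finset.range k, |(i:ℤ) - (k:ℤ)|)
          + (∑ j ∈ Finset.range k, |(k:ℤ) - (j:ℤ)|) := by
      rw [Finset.sum_range_succ]
      have inner : ∀ i ∈ Finset.range k,
          ∑ j ∈ Finset.range (k+1), |(i:ℤ) - (j:ℤ)|
            = (∑ j ∈ Finset.range k, |(i:ℤ) - (j:ℤ)|) + |(i:ℤ) - (k:ℤ)| :=
        fun i _ => Finset.sum_range_succ _ k
      rw [Finset.sum_congr rfl inner, Finset.sum_add_distrib,
        Finset.sum_range_succ (fun j => |(k:ℤ) - (j:ℤ)|) k]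
      simp
    have habs1 : ∑ i ∈ Finset.range k, |(i:ℤ) - (k:ℤ)| = ∑ i ∈ Finset.range k, ((k:ℤ) - i) := by
      apply Finset.sum_congr rfl
      intro i hi
      have : (i:ℤ) < (k:ℤ) := by exact_mod_cast Finset.mem_range.mp hi
      rw [abs_of_nonpos (by linarith)]; ring
    have habs2 : ∑ j ∈ Finset.range k, |(k:ℤ) - (j:ℤ)| = ∑ j ∈ Finset.range k, ((k:ℤ) - j) := by
      apply Finset.sum_congr rfl
      intro j hj
      have : (j:ℤ) < (k:ℤ) := by exact_mod_cast Finset.mem_range.mp hj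
      rw [abs_of_nonneg (by linarith)]
    have hsumk : ∑ i ∈ Finset.range k, ((k:ℤ) - i) = (k:ℤ)*k - (∑ i ∈ Finset.range k, (i:ℤ)) := by
      rw [Finset.sum_sub_distrib, Finset.sum_const, Finset.card_range, nsmul_eq_mul]
    rw [expand, habs1, habs2, hsumk]
    push_cast
    nlinarith [ih, hgauss]

lemma sum_abs_fin (k : ℕ) :
    (∑ i : Fin k, ∑ j : Fin k, |((i:ℕ):ℤ) - ((j:ℕ):ℤ)|) * 3 = (k:ℤ)^3 - (k:ℤ) := by
  rw [← sum_abs_range k]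
  congr 1
  rw [Fin.sum_univ_eq_sum_range (fun i => ∑ j : Fin k, |((i:ℤ)) - ((j:ℕ):ℤ)|)]
  apply Finset.sum_congr rfl
  intro i _
  rw [Fin.sum_univ_eq_sum_range (fun j => |((i:ℤ)) - (j:ℤ)|)]

end PNS

open PNS in
theorem expected_opt_travel_1D_tendsto' :
    Filter.Tendsto (fun m : ℕ =>
      (1 / ((Nat.factorial (m + 1) : ℝ) * ((m + 1 : ℕ) : ℝ) ^ 2)) *
        ∑ π : Equiv.Perm (Fin (m + 1)), optTravel1D (Nat.succ_pos m) π)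
      Filter.atTop (nhds (1 / 3)) := by
  have t1 : Filter.Tendsto (fun m : ℕ => (((m:ℝ)+1))⁻¹) Filter.atTop (nhds 0) := by
    simpa [one_div] using (tendsto_one_div_add_atTop_nhds_zero_nat :
      Filter.Tendsto (fun n : ℕ => 1 / ((n : ℝ) + 1)) Filter.atTop (nhds 0))
  have tglo : Filter.Tendsto (fun m : ℕ => 1/3 - ((((m:ℝ)+1))⁻¹)^2/3)
      Filter.atTop (nhds (1/3)) := by
    have := (tendsto_const_nhds (x := (1/3 : ℝ)) (f := Filter.atTop (α := ℕ))).sub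
      (((t1.pow 2)).div_const 3)
    simpa using this
  have tghi : Filter.Tendsto (fun m : ℕ => (1/3 - ((((m:ℝ)+1))⁻¹)^2/3) + 2 * (((m:ℝ)+1))⁻¹)
      Filter.atTop (nhds (1/3)) := by
    have := tglo.add ((t1.const_mul 2))
    simpa using this
  have common : ∀ m : ℕ,
      ((∑ π : Equiv.Perm (Fin (m+1)), LS π : ℤ):ℝ) * 3
        = (m.factorial:ℝ) * (((m:ℝ)+1)^3 - ((m:ℝ)+1)) := by
    intro m
    have h3 : (∑ π : Equiv.Perm (Fin (m+1)), LS π) * 3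
        = (m.factorial:ℤ) * ((((m+1:ℕ)):ℤ)^3 - ((m+1:ℕ):ℤ)) := by
      rw [sum_LS m, mul_assoc, sum_abs_fin (m+1)]
    exact_mod_cast h3
  have hfact : ∀ m : ℕ, ((Nat.factorial (m+1) : ℕ) : ℝ) = ((m:ℝ)+1) * (m.factorial:ℝ) := by
    intro m; rw [Nat.factorial_succ]; push_cast; ring
  have hxcast : ∀ m : ℕ, (((m+1:ℕ)):ℝ) = (m:ℝ)+1 := by intro m; push_cast; ring
  have hcast : ∀ m : ℕ, ((∑ π : Equiv.Perm (Fin (m+1)), LS π : ℤ):ℝ)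
      = ∑ π : Equiv.Perm (Fin (m+1)), ((LS π : ℤ):ℝ) := by intro m; push_cast; rfl
  have hF : ∀ m : ℕ, (0:ℝ) < (m.factorial : ℝ) := by
    intro m; exact_mod_cast m.factorial_pos
  have hx : ∀ m : ℕ, (0:ℝ) < (m:ℝ)+1 := by intro m; positivity
  apply tendsto_of_tendsto_of_tendsto_of_le_of_le tglo tghi
  · -- lower bound
    intro m
    dsimp only
    have hlow : (m.factorial:ℝ) * (((m:ℝ)+1)^3 - ((m:ℝ)+1)) / 3
        ≤ ∑ π : Equiv.Perm (Fin (m+1)), optTravel1D (Nat.succ_pos m) π := by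
      have hle : ∑ π : Equiv.Perm (Fin (m+1)), ((LS π : ℤ):ℝ)
          ≤ ∑ π : Equiv.Perm (Fin (m+1)), optTravel1D (Nat.succ_pos m) π :=
        Finset.sum_le_sum (fun π _ => opt_lower (Nat.succ_pos m) π)
      rw [← hcast m] at hle
      linarith [common m]
    have hglo : 1/3 - ((((m:ℝ)+1))⁻¹)^2/3
        = (1 / ((Nat.factorial (m+1) : ℝ) * ((m+1:ℕ):ℝ)^2)) *
            ((m.factorial:ℝ) * (((m:ℝ)+1)^3 - ((m:ℝ)+1)) / 3) := by
      rw [hfact m, hxcast m]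
      have h1 := hF m
      have h2 := hx m
      field_simp
    rw [hglo]
    apply mul_le_mul_of_nonneg_left hlow
    have h1 := hF m
    have h2 := hx m
    rw [hfact m, hxcast m]
    positivity
  · -- upper bound
    intro m
    dsimp only
    have hupp : ∑ π : Equiv.Perm (Fin (m+1)), optTravel1D (Nat.succ_pos m) π
        ≤ (m.factorial:ℝ) * (((m:ℝ)+1)^3 - ((m:ℝ)+1)) / 3
          + (((m:ℝ)+1) * (m.factorial:ℝ)) * (2*(((m:ℝ)+1)-1)) := by
      have hle : ∑ π : Equiv.Perm (Fin (m+1)), optTravel1D (Nat.succ_pos m) π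
          ≤ ∑ π : Equiv.Perm (Fin (m+1)), (((LS π : ℤ):ℝ) + 2 * (((m+1:ℕ):ℝ) - 1)) :=
        Finset.sum_le_sum (fun π _ => opt_upper (Nat.succ_pos m) π)
      have hsplit : ∑ π : Equiv.Perm (Fin (m+1)), (((LS π : ℤ):ℝ) + 2 * (((m+1:ℕ):ℝ) - 1))
          = (∑ π : Equiv.Perm (Fin (m+1)), ((LS π : ℤ):ℝ))
            + (Nat.factorial (m+1) : ℝ) * (2 * (((m:ℝ)+1) - 1)) := by
        rw [Finset.sum_add_distrib, Finset.sum_const, Finset.card_univ, Fintype.card_perm,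
          Fintype.card_fin, nsmul_eq_mul, hxcast m]
      rw [hsplit, ← hcast m, hfact m] at hle
      linarith [common m]
    have hDpos : (0:ℝ) < (Nat.factorial (m+1) : ℝ) * ((m+1:ℕ):ℝ)^2 := by
      rw [hfact m, hxcast m]
      have h1 := hF m
      have h2 := hx m
      positivity
    have final : (1 / ((Nat.factorial (m+1) : ℝ) * ((m+1:ℕ):ℝ)^2)) *
          ((m.factorial:ℝ) * (((m:ℝ)+1)^3 - ((m:ℝ)+1)) / 3
            + (((m:ℝ)+1) * (m.factorial:ℝ)) * (2*(((m:ℝ)+1)-1)))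
        ≤ (1/3 - ((((m:ℝ)+1))⁻¹)^2/3) + 2 * (((m:ℝ)+1))⁻¹ := by
      rw [hfact m, hxcast m]
      have h1 := hF m
      have h2 := hx m
      rw [div_mul_eq_mul_div, one_mul, div_le_iff₀ (by positivity)]
      have hm0 : (0:ℝ) ≤ (m:ℝ) := Nat.cast_nonneg m
      have hexp : ((1:ℝ)/3 - ((((m:ℝ)+1))⁻¹)^2/3 + 2*(((m:ℝ)+1))⁻¹) *
            (((m:ℝ)+1) * (m.factorial:ℝ) * ((m:ℝ)+1)^2)
          = (m.factorial:ℝ) * (((m:ℝ)+1)^3 - ((m:ℝ)+1))/3 + 2 * ((m:ℝ)+1)^2 * (m.factorial:ℝ) := by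
        field_simp
      rw [hexp]
      nlinarith [h1, hm0]
    calc (1 / ((Nat.factorial (m+1) : ℝ) * ((m+1:ℕ):ℝ)^2)) *
          ∑ π : Equiv.Perm (Fin (m+1)), optTravel1D (Nat.succ_pos m) π
        ≤ (1 / ((Nat.factorial (m+1) : ℝ) * ((m+1:ℕ):ℝ)^2)) *
            ((m.factorial:ℝ) * (((m:ℝ)+1)^3 - ((m:ℝ)+1)) / 3
              + (((m:ℝ)+1) * (m.factorial:ℝ)) * (2*(((m:ℝ)+1)-1))) := by
          apply mul_le_mul_of_nonneg_left hupp
          positivity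
      _ ≤ (1/3 - ((((m:ℝ)+1))⁻¹)^2/3) + 2 * (((m:ℝ)+1))⁻¹ := final

/-- The expected optimal end-effector travel for a uniformly random permutation of
`Fin m`, normalized by `m²`, converges to `1/3` as `m → ∞`. -/
theorem expected_opt_travel_1D_tendsto :
    Filter.Tendsto (fun m : ℕ =>
      (1 / ((Nat.factorial (m + 1) : ℝ) * ((m + 1 : ℕ) : ℝ) ^ 2)) *
        ∑ π : Equiv.Perm (Fin (m + 1)), optTravel1D (Nat.succ_pos m) π)
      Filter.atTop (nhds (1 / 3)) := by
  exact expected_opt_travel_1D_tendsto'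
end

section
/- For every m ≥ 1, the expected minimum number of pick-n-swap operations needed to sort a uniformly random permutation of Fin m equals m + H_m − 2; equivalently, (1/m!) · Σ_{π ∈ Equiv.Perm (Fin m)} (π.support.card + π.cycleType.card) = m + H_m − 2, where H_m = Σ_{i=1}^{m} 1/i is the m-th harmonic number. -/
open Equiv Equiv.Perm Finset

section PickNSwapAux

variable {α : Type*} [DecidableEq α] [Fintype α]


/-- Multiplying by a transposition of two fixed points adds a 2-cycle. -/
lemma pns_swap_fresh (f : Perm α) {a b : α} (ha : f a = a) (hb : f b = b) (hab : a ≠ b) :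
    (swap a b * f).support.card = f.support.card + 2 ∧
      Multiset.card (swap a b * f).cycleType = Multiset.card f.cycleType + 1 := by
  have hd : Perm.Disjoint (swap a b) f := by
    rw [disjoint_iff_disjoint_support, support_swap hab]
    rw [Finset.disjoint_left]
    intro x hx
    simp only [Finset.mem_insert, Finset.mem_singleton] at hx
    rcases hx with rfl | rfl <;> simp [mem_support, ha, hb]
  refine ⟨?_, ?_⟩
  · rw [hd.card_support_mul, card_support_swap hab, add_comm]
  · rw [hd.cycleType_mul, (isCycle_swap hab).cycleType, card_support_swap hab]
    simp [add_comm]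

lemma pns_swap_insert (f : Perm α) {a b : α} (ha : f a = a) (hb : b ∈ f.support) :
    (swap a b * f).support.card = f.support.card + 1 ∧
      Multiset.card (swap a b * f).cycleType = Multiset.card f.cycleType := by
  have hb' : f b ≠ b := mem_support.1 hb
  have hab : a ≠ b := by rintro rfl; exact hb' ha
  set c : Perm α := f.cycleOf b with hc_def
  have hc : c.IsCycle := isCycle_cycleOf f hb'
  set d : Perm α := c⁻¹ * f with hd_def
  have hcd : c * d = f := by rw [hd_def]; group
  have hagree : ∀ x ∈ c.support, c x = f x := fun x hx =>
    (mem_support_cycleOf_iff.1 hx).1.cycleOf_apply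
  have hdisj : Perm.Disjoint c d := by
    intro x
    by_cases hx : x ∈ c.support
    · right
      rw [hd_def, Perm.mul_apply, ← hagree x hx, ← Perm.mul_apply, inv_mul_cancel, Perm.one_apply]
    · left; exact notMem_support.1 hx
  have hsupf : f.support = c.support ∪ d.support := by
    rw [← hcd]; exact hdisj.support_mul
  have hanotc : a ∉ c.support := fun h =>
    (mem_support.1 (support_cycleOf_le f b h)) ha
  have hanotd : a ∉ d.support := by
    intro h
    exact (mem_support.1 (by rw [hsupf]; exact Finset.mem_union_right _ h)) ha
  -- the list of the cycle of b
  set l : List α := f.toList b with hl_def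
  have hlform : l.formPerm = c := formPerm_toList f b
  have hlnd : l.Nodup := nodup_toList f b
  have hlne : l ≠ [] := by simp [hl_def, hb]
  have hhead : l.head hlne = b := by
    rw [List.head_eq_getElem]; exact toList_getElem_zero (p := f) (x := b) hb
  have hl2 : 2 ≤ l.length := by
    rw [hl_def]; exact two_le_length_toList_iff_mem_support.2 hb
  have hanotl : a ∉ l := by
    intro hmem
    rw [hl_def, mem_toList_iff] at hmem
    exact hanotc (mem_support_cycleOf_iff.2 ⟨hmem.1, hb⟩)
  obtain ⟨t, ht⟩ : ∃ t, l = b :: t := ⟨l.tail, by rw [← hhead]; exact (List.cons_head_tail hlne).symm⟩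
  -- swap a b * c is the cycle on a :: l
  have hform2 : (a :: l).formPerm = swap a b * c := by
    rw [ht, List.formPerm_cons_cons, ← ht, hlform]
  have handnd : (a :: l).Nodup := List.nodup_cons.2 ⟨hanotl, hlnd⟩
  have hc' : (swap a b * c).IsCycle := by
    rw [← hform2]
    exact List.isCycle_formPerm handnd (by simp only [List.length_cons]; omega)
  have hsupc' : (swap a b * c).support = insert a c.support := by
    rw [← hform2, List.support_formPerm_of_nodup _ handnd (by
      intro x hx
      simp only [List.cons.injEq] at hx
      exact hlne hx.2)]
    rw [← hlform, List.support_formPerm_of_nodup _ hlnd (by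
      intro x hx; rw [hx] at hl2; simp at hl2)]
    simp
  have hdisj' : Perm.Disjoint (swap a b * c) d := by
    rw [disjoint_iff_disjoint_support, hsupc', Finset.disjoint_left]
    intro x hx
    rcases Finset.mem_insert.1 hx with rfl | hx
    · exact hanotd
    · exact Finset.disjoint_left.1 (disjoint_iff_disjoint_support.1 hdisj) hx
  -- conclude
  have hkey : swap a b * f = (swap a b * c) * d := by rw [mul_assoc, hcd]
  constructor
  · rw [hkey, hdisj'.card_support_mul, hsupc', Finset.card_insert_of_notMem hanotc,
      hsupf, Finset.card_union_of_disjoint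
        (disjoint_iff_disjoint_support.1 hdisj)]
    ring
  · rw [hkey, hdisj'.cycleType_mul, ← hcd, hdisj.cycleType_mul, hc'.cycleType, hc.cycleType]
    simp


lemma pns_decompose_zero {n : ℕ} (e : Perm (Fin n)) :
    Equiv.Perm.decomposeFin.symm (0, e) = e.extendDomain (finSuccAboveEquiv 0) := by
  ext x
  refine Fin.cases ?_ ?_ x
  · rw [Equiv.Perm.decomposeFin_symm_apply_zero]
    rw [Perm.extendDomain_apply_not_subtype]
    simp
  · intro i
    rw [Equiv.Perm.decomposeFin_symm_apply_succ]
    have h1 : (i.succ : Fin (n + 1)) = ((finSuccAboveEquiv 0) i : Fin (n+1)) := by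
      simp [finSuccAboveEquiv]
    rw [h1, Perm.extendDomain_apply_image]
    simp [finSuccAboveEquiv, Equiv.swap_self]

lemma pns_decompose_succ {n : ℕ} (p : Fin n) (e : Perm (Fin n)) :
    Equiv.Perm.decomposeFin.symm (p.succ, e) =
      Equiv.swap 0 p.succ * Equiv.Perm.decomposeFin.symm (0, e) := by
  ext x
  refine Fin.cases ?_ ?_ x
  · simp [Equiv.Perm.decomposeFin_symm_apply_zero]
  · intro i
    rw [Perm.mul_apply, Equiv.Perm.decomposeFin_symm_apply_succ,
      Equiv.Perm.decomposeFin_symm_apply_succ]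
    simp [Equiv.swap_self]

lemma pns_zero_support {n : ℕ} (e : Perm (Fin n)) :
    (Equiv.Perm.decomposeFin.symm (0, e)).support.card = e.support.card := by
  rw [pns_decompose_zero, Perm.card_support_extend_domain]

lemma pns_zero_cycleType {n : ℕ} (e : Perm (Fin n)) :
    (Equiv.Perm.decomposeFin.symm (0, e)).cycleType = e.cycleType := by
  rw [pns_decompose_zero, Perm.cycleType_extendDomain]

lemma pns_succ_pair {n : ℕ} (q : Fin n) (e : Perm (Fin n)) :
    (Equiv.Perm.decomposeFin.symm (q.succ, e)).support.card
        = e.support.card + (if e q = q then 2 else 1) ∧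
      Multiset.card (Equiv.Perm.decomposeFin.symm (q.succ, e)).cycleType
        = Multiset.card e.cycleType + (if e q = q then 1 else 0) := by
  set E : Perm (Fin (n + 1)) := Equiv.Perm.decomposeFin.symm (0, e) with hE
  have hz : E 0 = 0 := Equiv.Perm.decomposeFin_symm_apply_zero 0 e
  have hs : E q.succ = (e q).succ := by
    rw [hE, Equiv.Perm.decomposeFin_symm_apply_succ, Equiv.swap_self]
    rfl
  rw [pns_decompose_succ, ← hE]
  by_cases hq : e q = q
  · have h1 := pns_swap_fresh E hz (by rw [hs, hq]) (Fin.succ_ne_zero q).symm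
    simp only [if_pos hq]; rw [h1.1, h1.2, pns_zero_support, pns_zero_cycleType]
    exact ⟨rfl, rfl⟩
  · have hmem : q.succ ∈ E.support := by
      rw [Perm.mem_support, hs]
      exact fun h => hq (Fin.succ_injective _ h)
    have h1 := pns_swap_insert E hz hmem
    simp only [if_neg hq]; rw [h1.1, h1.2, pns_zero_support, pns_zero_cycleType]
    exact ⟨rfl, rfl⟩
lemma pns_fix_sum (n : ℕ) :
    ∑ q : Fin n, ∑ e : Perm (Fin n), (if e q = q then (1 : ℝ) else 0)
      = n * n.factorial - ∑ e : Perm (Fin n), (e.support.card : ℝ) := by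
  rw [Finset.sum_comm]
  have h1 : ∀ e : Perm (Fin n),
      ∑ q : Fin n, (if e q = q then (1 : ℝ) else 0) = (n : ℝ) - e.support.card := by
    intro e
    rw [Finset.sum_boole]
    have h2 : ({q | e q = q} : Finset (Fin n)).card + e.support.card = n := by
      have : e.support = ({q | ¬ e q = q} : Finset (Fin n)) := rfl
      rw [this, Finset.card_filter_add_card_filter_not]
      simp
    have h3 : ({q | e q = q} : Finset (Fin n)).card = n - e.support.card := by omega
    rw [h3]
    have h4 : e.support.card ≤ n := by omega
    push_cast [h4]
    ring
  simp_rw [h1]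
  rw [Finset.sum_sub_distrib, Finset.sum_const, Finset.card_univ, Fintype.card_perm,
    Fintype.card_fin, nsmul_eq_mul]
  ring

lemma pns_counts : ∀ n : ℕ, 1 ≤ n →
    (∑ e : Perm (Fin n), (e.support.card : ℝ)) = ((n : ℝ) - 1) * n.factorial ∧
    (∑ e : Perm (Fin n), (Multiset.card e.cycleType : ℝ))
      = n.factorial * ((∑ i ∈ Finset.range n, (1 : ℝ) / (i + 1)) - 1) := by
  intro n hn
  induction n, hn using Nat.le_induction with
  | base =>
    have hone : ∀ e : Perm (Fin 1), e = 1 := fun e => Subsingleton.elim e 1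
    constructor
    · rw [Finset.sum_eq_zero (fun e _ => by rw [hone e]; simp)]
      simp
    · rw [Finset.sum_eq_zero (fun e _ => by rw [hone e]; simp)]
      simp
  | succ n hn' IH =>
    obtain ⟨IH1, IH2⟩ := IH
    have key : ∀ F : Perm (Fin (n + 1)) → ℝ,
        ∑ π : Perm (Fin (n + 1)), F π
          = ∑ p : Fin (n + 1), ∑ e : Perm (Fin n),
              F (Equiv.Perm.decomposeFin.symm (p, e)) := by
      intro F
      rw [← Equiv.sum_comp (Equiv.Perm.decomposeFin.symm) F, Fintype.sum_prod_type]
    have hcard : ∑ _e : Perm (Fin n), (1 : ℝ) = n.factorial := by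
      rw [Finset.sum_const, Finset.card_univ, Fintype.card_perm, Fintype.card_fin,
        nsmul_eq_mul, mul_one]
    constructor
    · rw [key]
      rw [Fin.sum_univ_succ]
      have e0 : ∑ e : Perm (Fin n),
          ((Equiv.Perm.decomposeFin.symm ((0 : Fin (n+1)), e)).support.card : ℝ)
            = ((n : ℝ) - 1) * n.factorial := by
        simp_rw [pns_zero_support]; exact IH1
      rw [e0]
      have es : ∀ (q : Fin n) (e : Perm (Fin n)),
          ((Equiv.Perm.decomposeFin.symm (q.succ, e)).support.card : ℝ)
            = (e.support.card : ℝ) + 1 + (if e q = q then (1 : ℝ) else 0) := by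
        intro q e
        rw [(pns_succ_pair q e).1]
        push_cast [apply_ite (Nat.cast : ℕ → ℝ)]
        split <;> ring
      simp_rw [es, Finset.sum_add_distrib, IH1, hcard]
      rw [pns_fix_sum, IH1]
      simp only [Finset.sum_const, Finset.card_univ, Fintype.card_fin, nsmul_eq_mul]
      push_cast [Nat.factorial_succ]
      ring
    · rw [key]
      rw [Fin.sum_univ_succ]
      have e0 : ∑ e : Perm (Fin n),
          ((Multiset.card (Equiv.Perm.decomposeFin.symm ((0 : Fin (n+1)), e)).cycleType : ℕ) : ℝ)
            = (n.factorial : ℝ) * ((∑ i ∈ Finset.range n, (1 : ℝ) / (i + 1)) - 1) := by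
        simp_rw [pns_zero_cycleType]; exact IH2
      rw [e0]
      have es : ∀ (q : Fin n) (e : Perm (Fin n)),
          ((Multiset.card (Equiv.Perm.decomposeFin.symm (q.succ, e)).cycleType : ℕ) : ℝ)
            = ((Multiset.card e.cycleType : ℕ) : ℝ) + (if e q = q then (1 : ℝ) else 0) := by
        intro q e
        rw [(pns_succ_pair q e).2]
        push_cast [apply_ite (Nat.cast : ℕ → ℝ)]
        split <;> ring
      simp_rw [es, Finset.sum_add_distrib, IH2]
      rw [pns_fix_sum, IH1]
      simp only [Finset.sum_const, Finset.card_univ, Fintype.card_fin, nsmul_eq_mul]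
      rw [Finset.sum_range_succ]
      have hfac : ((n + 1).factorial : ℝ) = (n + 1) * n.factorial := by
        push_cast [Nat.factorial_succ]; ring
      rw [hfac]
      have hne : (n : ℝ) + 1 ≠ 0 := by positivity
      field_simp
      ring

end PickNSwapAux

/-- The expected minimum number of pick-n-swap operations needed to sort a uniformly
random permutation of `Fin m`, namely the average of
`π.support.card + π.cycleType.card`, equals `m + H_m − 2`, where
`H_m = Σ_{i=1}^m 1/i` is the m-th harmonic number. -/
theorem expected_min_pick_n_swaps (m : ℕ) (hm : 1 ≤ m) :
    (1 / (Nat.factorial m : ℝ)) *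
      ∑ π : Equiv.Perm (Fin m),
        ((π.support.card : ℝ) + (Multiset.card π.cycleType : ℝ)) =
      (m : ℝ) + (∑ i ∈ Finset.range m, (1 : ℝ) / (i + 1)) - 2 := by
  obtain ⟨h1, h2⟩ := pns_counts m hm
  rw [Finset.sum_add_distrib, h1, h2]
  have hfac : (m.factorial : ℝ) ≠ 0 := Nat.cast_ne_zero.2 m.factorial_ne_zero
  field_simp
  ring
end

section
/- Fix m ≥ 1, k ≥ 1 and type assignments s, g : Fin m → Fin k such that for every type t : Fin k the number of cells i with s i = t equals the number of cells i with g i = t. Then the minimum of Σ_{i : Fin m} |(σ i : ℕ) − (i : ℕ)| over all permutations σ of Fin m satisfying g (σ i) = s i for all i equals Σ_{j=0}^{m−1} Σ_{t : Fin k} |#{i : (i : ℕ) ≤ j ∧ s i = t} − #{i : (i : ℕ) ≤ j ∧ g i = t}|, the total prefix-count discrepancy between the initial and goal type arrangements. -/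
/-- `prefCount f j t`: the number of cells `i` with position `(i : ℕ) ≤ j` whose
type under `f` is `t`, as an integer. -/
def prefCount {m k : ℕ} (f : Fin m → Fin k) (j : ℕ) (t : Fin k) : ℤ :=
  ((Finset.univ.filter (fun i : Fin m => (i : ℕ) ≤ j ∧ f i = t)).card : ℤ)

open Finset

/-- Indicator count of items of type `t` crossing cut `j` rightwards. -/
def outC {m k : ℕ} (s : Fin m → Fin k) (σ : Fin m → Fin m) (j : ℕ) (t : Fin k) : ℤ :=
  ∑ i : Fin m, if (i:ℕ) ≤ j ∧ ¬((σ i:ℕ) ≤ j) ∧ s i = t then 1 else 0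

/-- Indicator count of items of type `t` crossing cut `j` leftwards. -/
def inC {m k : ℕ} (s : Fin m → Fin k) (σ : Fin m → Fin m) (j : ℕ) (t : Fin k) : ℤ :=
  ∑ i : Fin m, if ¬((i:ℕ) ≤ j) ∧ (σ i:ℕ) ≤ j ∧ s i = t then 1 else 0

lemma outC_nonneg {m k : ℕ} (s : Fin m → Fin k) (σ : Fin m → Fin m) (j : ℕ) (t : Fin k) :
    0 ≤ outC s σ j t :=
  Finset.sum_nonneg fun i _ => by split <;> norm_num

lemma inC_nonneg {m k : ℕ} (s : Fin m → Fin k) (σ : Fin m → Fin m) (j : ℕ) (t : Fin k) :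
    0 ≤ inC s σ j t :=
  Finset.sum_nonneg fun i _ => by split <;> norm_num

lemma abs_sub_eq_sum_cross (m a b : ℕ) (ha : a < m) (hb : b < m) :
    |(a:ℤ) - b| = ∑ j ∈ range m, (if ¬((b ≤ j) ↔ (a ≤ j)) then (1:ℤ) else 0) := by
  have h1 : (∑ j ∈ range m, (if ¬((b ≤ j) ↔ (a ≤ j)) then (1:ℤ) else 0))
      = ((range m).filter (fun j => ¬((b ≤ j) ↔ (a ≤ j)))).card := by
    rw [Finset.card_filter]; push_cast [apply_ite (Nat.cast : ℕ → ℤ)]; rfl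
  have h2 : ((range m).filter (fun j => ¬((b ≤ j) ↔ (a ≤ j)))) = Finset.Ico (min a b) (max a b) := by
    ext j; simp only [mem_filter, mem_range, Finset.mem_Ico]; omega
  rw [h1, h2, Nat.card_Ico, Int.abs_eq_natAbs]; omega

/-- Total displacement equals sum over cuts and types of crossings. -/
lemma displacement_eq {m k : ℕ} (s : Fin m → Fin k) (σ : Fin m → Fin m) :
    (∑ i : Fin m, |((σ i : ℕ) : ℤ) - ((i : ℕ) : ℤ)|)
      = ∑ j ∈ range m, ∑ t : Fin k, (outC s σ j t + inC s σ j t) := by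
  have step1 : (∑ i : Fin m, |((σ i : ℕ) : ℤ) - ((i : ℕ) : ℤ)|)
      = ∑ i : Fin m, ∑ j ∈ range m,
          (if ¬(((i:ℕ) ≤ j) ↔ ((σ i:ℕ) ≤ j)) then (1:ℤ) else 0) := by
    refine Finset.sum_congr rfl fun i _ => ?_
    exact abs_sub_eq_sum_cross m (σ i) i (σ i).isLt i.isLt
  rw [step1, Finset.sum_comm]
  refine Finset.sum_congr rfl fun j _ => ?_
  unfold outC inC
  have hsplit : ∀ t : Fin k,
      ((∑ i : Fin m, if (i:ℕ) ≤ j ∧ ¬((σ i:ℕ) ≤ j) ∧ s i = t then (1:ℤ) else 0)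
        + ∑ i : Fin m, if ¬((i:ℕ) ≤ j) ∧ (σ i:ℕ) ≤ j ∧ s i = t then 1 else 0)
      = ∑ i : Fin m, ((if (i:ℕ) ≤ j ∧ ¬((σ i:ℕ) ≤ j) ∧ s i = t then (1:ℤ) else 0)
        + (if ¬((i:ℕ) ≤ j) ∧ (σ i:ℕ) ≤ j ∧ s i = t then 1 else 0)) :=
    fun t => (Finset.sum_add_distrib).symm
  simp only [hsplit]
  rw [Finset.sum_comm]
  refine Finset.sum_congr rfl fun i _ => ?_
  have hpt : ∀ t : Fin k,
      ((if (i:ℕ) ≤ j ∧ ¬((σ i:ℕ) ≤ j) ∧ s i = t then (1:ℤ) else 0)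
        + (if ¬((i:ℕ) ≤ j) ∧ (σ i:ℕ) ≤ j ∧ s i = t then 1 else 0))
      = (if s i = t then (if ¬(((i:ℕ) ≤ j) ↔ ((σ i:ℕ) ≤ j)) then (1:ℤ) else 0) else 0) := by
    intro t
    by_cases h1 : (i:ℕ) ≤ j <;> by_cases h2 : (σ i:ℕ) ≤ j <;> by_cases h3 : s i = t <;>
      simp [h1, h2, h3]
  simp only [hpt]
  simp

/-- Crossing imbalance equals prefix-count discrepancy. -/
lemma outC_sub_inC {m k : ℕ} (s g : Fin m → Fin k) (σ : Equiv.Perm (Fin m))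
    (hσ : ∀ i, g (σ i) = s i) (j : ℕ) (t : Fin k) :
    outC s σ j t - inC s σ j t = prefCount s j t - prefCount g j t := by
  have hpc : ∀ f : Fin m → Fin k, prefCount f j t
      = ∑ i : Fin m, (if (i:ℕ) ≤ j ∧ f i = t then (1:ℤ) else 0) := by
    intro f
    rw [prefCount, Finset.card_filter]
    push_cast [apply_ite (Nat.cast : ℕ → ℤ)]; rfl
  have hg : prefCount g j t = ∑ i : Fin m, (if (σ i:ℕ) ≤ j ∧ s i = t then (1:ℤ) else 0) := by
    rw [hpc g, ← Equiv.sum_comp σ (fun i : Fin m => if (i:ℕ) ≤ j ∧ g i = t then (1:ℤ) else 0)]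
    refine Finset.sum_congr rfl fun i _ => ?_
    rw [hσ i]
  rw [hg, hpc s, outC, inC, ← Finset.sum_sub_distrib, ← Finset.sum_sub_distrib]
  refine Finset.sum_congr rfl fun i _ => ?_
  by_cases h1 : (i:ℕ) ≤ j <;> by_cases h2 : (σ i:ℕ) ≤ j <;> by_cases h3 : s i = t <;>
    simp [h1, h2, h3]

/-- For type assignments `s` (initial) and `g` (goal) with equal counts for every
type, the minimum total displacement `Σ_i |σ i − i|` over all permutations `σ`
consistent with the types (`g (σ i) = s i`) equals the total prefix-count
discrepancy `Σ_{j<m} Σ_t |#{i ≤ j, s i = t} − #{i ≤ j, g i = t}|`. -/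
theorem min_typed_displacement {m k : ℕ} (hm : 1 ≤ m) (hk : 1 ≤ k)
    (s g : Fin m → Fin k)
    (hcount : ∀ t : Fin k,
      (Finset.univ.filter (fun i : Fin m => s i = t)).card =
      (Finset.univ.filter (fun i : Fin m => g i = t)).card) :
    IsLeast {d : ℤ | ∃ σ : Equiv.Perm (Fin m), (∀ i, g (σ i) = s i) ∧
        (∑ i : Fin m, |((σ i : ℕ) : ℤ) - ((i : ℕ) : ℤ)|) = d}
      (∑ j ∈ Finset.range m, ∑ t : Fin k, |prefCount s j t - prefCount g j t|) := by
  classical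
  set A : Fin k → Finset (Fin m) := fun t => univ.filter (fun i => s i = t) with hA
  set B : Fin k → Finset (Fin m) := fun t => univ.filter (fun i => g i = t) with hB
  have iso : ∀ t : Fin k, {x // x ∈ A t} ≃o {x // x ∈ B t} := fun t =>
    ((A t).orderIsoOfFin rfl).symm.trans ((B t).orderIsoOfFin (hcount t).symm)
  have memA : ∀ i : Fin m, i ∈ A (s i) := fun i => by simp [hA]
  set σ0 : Fin m → Fin m := fun i => ((iso (s i) ⟨i, memA i⟩ : {x // x ∈ B (s i)}) : Fin m)
    with hσ0
  have hgs : ∀ i, g (σ0 i) = s i := by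
    intro i
    have := (iso (s i) ⟨i, memA i⟩).2
    simp only [hB, mem_filter] at this
    exact this.2
  have hcongr : ∀ (t t' : Fin k), t = t' → ∀ (x : {x // x ∈ A t}) (x' : {x // x ∈ A t'}),
      (x : Fin m) = (x' : Fin m) →
      ((iso t x : {y // y ∈ B t}) : Fin m) = ((iso t' x' : {y // y ∈ B t'}) : Fin m) := by
    rintro t t' rfl x x' h
    rw [Subtype.ext h]
  have hmono : ∀ i i' : Fin m, s i = s i' → (i:ℕ) < (i':ℕ) → (σ0 i : ℕ) < (σ0 i' : ℕ) := by
    intro i i' hst hlt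
    have hmem : i' ∈ A (s i) := by rw [hst]; exact memA i'
    have he : σ0 i' = ((iso (s i) ⟨i', hmem⟩ : {y // y ∈ B (s i)}) : Fin m) :=
      hcongr (s i') (s i) hst.symm ⟨i', memA i'⟩ ⟨i', hmem⟩ rfl
    have hei : σ0 i = ((iso (s i) ⟨i, memA i⟩ : {y // y ∈ B (s i)}) : Fin m) := rfl
    rw [hei, he]
    have hlt' : (⟨i, memA i⟩ : {x // x ∈ A (s i)}) < ⟨i', hmem⟩ := by
      rw [Subtype.mk_lt_mk]; exact Fin.lt_def.mpr hlt
    have := (iso (s i)).strictMono hlt'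
    exact Fin.lt_def.mp (Subtype.coe_lt_coe.mpr this)
  have hinj : Function.Injective σ0 := by
    intro i i' h
    have hst : s i = s i' := by rw [← hgs i, ← hgs i', h]
    have hmem : i' ∈ A (s i) := by rw [hst]; exact memA i'
    have he : σ0 i' = ((iso (s i) ⟨i', hmem⟩ : {y // y ∈ B (s i)}) : Fin m) :=
      hcongr (s i') (s i) hst.symm ⟨i', memA i'⟩ ⟨i', hmem⟩ rfl
    have hei : σ0 i = ((iso (s i) ⟨i, memA i⟩ : {y // y ∈ B (s i)}) : Fin m) := rfl
    have h' : σ0 i = σ0 i' := h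
    rw [hei, he] at h'
    have h2 : (iso (s i)) ⟨i, memA i⟩ = (iso (s i)) ⟨i', hmem⟩ := Subtype.coe_injective h'
    have h3 := (iso (s i)).injective h2
    exact congrArg Subtype.val h3
  set σ : Equiv.Perm (Fin m) := Equiv.ofBijective σ0 hinj.bijective_of_finite with hσdef
  have hσapp : ∀ i, σ i = σ0 i := fun i => rfl
  -- zero-crossing property of the constructed permutation
  have hzero : ∀ (j : ℕ) (t : Fin k), outC s σ j t = 0 ∨ inC s σ j t = 0 := by
    intro j t
    by_contra hc
    push_neg at hc
    have hex1 : ∃ i : Fin m, (i:ℕ) ≤ j ∧ ¬((σ i:ℕ) ≤ j) ∧ s i = t := by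
      by_contra h; push_neg at h
      exact hc.1 (Finset.sum_eq_zero fun i _ => if_neg (by
        intro ⟨a, b, c⟩; exact absurd c (h i a (by omega))))
    have hex2 : ∃ i : Fin m, ¬((i:ℕ) ≤ j) ∧ (σ i:ℕ) ≤ j ∧ s i = t := by
      by_contra h; push_neg at h
      exact hc.2 (Finset.sum_eq_zero fun i _ => if_neg (by
        intro ⟨a, b, c⟩; exact absurd c (h i (by omega) b)))
    obtain ⟨i, hi1, hi2, hi3⟩ := hex1
    obtain ⟨i', hi'1, hi'2, hi'3⟩ := hex2
    have hst : s i = s i' := by rw [hi3, hi'3]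
    have : (σ0 i : ℕ) < (σ0 i' : ℕ) := hmono i i' hst (by omega)
    rw [← hσapp i, ← hσapp i'] at this
    omega
  constructor
  · refine ⟨σ, hgs, ?_⟩
    rw [displacement_eq s σ]
    refine Finset.sum_congr rfl fun j _ => Finset.sum_congr rfl fun t _ => ?_
    rw [← outC_sub_inC s g σ hgs j t]
    have h1 := outC_nonneg s σ j t
    have h2 := inC_nonneg s σ j t
    rcases hzero j t with h | h <;> rw [h]
    · rw [zero_sub, abs_neg, abs_of_nonneg h2, zero_add]
    · rw [sub_zero, abs_of_nonneg h1, add_zero]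
  · rintro d ⟨σ', hσ', rfl⟩
    rw [displacement_eq s σ']
    refine Finset.sum_le_sum fun j _ => Finset.sum_le_sum fun t _ => ?_
    rw [← outC_sub_inC s g σ' hσ' j t]
    have h1 := outC_nonneg s σ' j t
    have h2 := inC_nonneg s σ' j t
    rw [abs_le]
    constructor <;> linarith
end

section
/- Fix m ≥ 1, k ≥ 1 and type assignments s, g : Fin m → Fin k with equal counts for every type. In the partially-labeled pick-n-swap model with initial typed arrangement s and goal typed arrangement g, the minimum number of pick-n-swap operations over all valid plans equals the minimum, over all permutations σ of Fin m satisfying g (σ i) = s i for all i, of σ.support.card + σ.cycleType.card. -/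
/-- A plan is valid for the partially-labeled instance with initial typed
arrangement `s` and goal typed arrangement `g` if executing it transforms the
initial state into the goal state. -/
def ValidPlanTyped {m k : ℕ} (s g : Fin m → Fin k) (plan : List (Fin m)) : Prop :=
  pnsExec (fun i => some (s i), none) plan = (fun i => some (g i), none)

open Equiv Equiv.Perm

section Basic
variable {γ β β' : Type*} [DecidableEq γ]

lemma pnsExec_nil (st : (γ → Option β) × Option β) : pnsExec st [] = st := rfl

lemma pnsExec_cons (st : (γ → Option β) × Option β) (x : γ) (p : List γ) :
    pnsExec st (x :: p) = pnsExec (pnsStep st x) p := rfl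

lemma pnsExec_append (st : (γ → Option β) × Option β) (p q : List γ) :
    pnsExec st (p ++ q) = pnsExec (pnsExec st p) q :=
  List.foldl_append

lemma pnsExec_not_mem (p : List γ) (st : (γ → Option β) × Option β) (z : γ) (hz : z ∉ p) :
    (pnsExec st p).1 z = st.1 z := by
  induction p generalizing st with
  | nil => rfl
  | cons y q ih =>
      rw [pnsExec_cons, ih _ (fun h => hz (List.mem_cons_of_mem _ h))]
      exact Function.update_of_ne (fun h => hz (by simp [h])) _ _

lemma pnsStep_map (f : β → β') (st : (γ → Option β) × Option β) (ℓ : γ) :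
    pnsStep (fun i => (st.1 i).map f, st.2.map f) ℓ =
      ((fun i => ((pnsStep st ℓ).1 i).map f), ((pnsStep st ℓ).2).map f) := by
  refine Prod.ext ?_ rfl
  funext i
  by_cases h : i = ℓ
  · subst h; simp [pnsStep]
  · simp [pnsStep, Function.update_of_ne h]

lemma pnsExec_map (f : β → β') (p : List γ) (st : (γ → Option β) × Option β) :
    pnsExec (fun i => (st.1 i).map f, st.2.map f) p =
      ((fun i => ((pnsExec st p).1 i).map f), ((pnsExec st p).2).map f) := by
  induction p generalizing st with
  | nil => rfl
  | cons y q ih => rw [pnsExec_cons, pnsStep_map, ih, pnsExec_cons]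

lemma map_update_eq [Fintype γ] (a : γ → Option β) (ℓ : γ) (h : Option β) :
    (Finset.univ.val.map (Function.update a ℓ h)) =
      h ::ₘ ((Finset.univ.val.erase ℓ).map a) := by
  have hmem : ℓ ∈ Finset.univ.val := Finset.mem_univ_val ℓ
  conv_lhs => rw [← Multiset.cons_erase hmem]
  rw [Multiset.map_cons, Function.update_self]
  congr 1
  refine Multiset.map_congr rfl ?_
  intro z hz
  have hne : z ≠ ℓ := (Finset.univ.nodup.mem_erase_iff.mp hz).1
  exact Function.update_of_ne hne _ _

lemma map_self_eq [Fintype γ] (a : γ → Option β) (ℓ : γ) :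
    (Finset.univ.val.map a) = a ℓ ::ₘ ((Finset.univ.val.erase ℓ).map a) := by
  have hmem : ℓ ∈ Finset.univ.val := Finset.mem_univ_val ℓ
  conv_lhs => rw [← Multiset.cons_erase hmem]
  rw [Multiset.map_cons]

lemma pnsExec_inv [Fintype γ] (p : List γ) (st : (γ → Option β) × Option β) :
    (pnsExec st p).2 ::ₘ Finset.univ.val.map (pnsExec st p).1 =
      st.2 ::ₘ Finset.univ.val.map st.1 := by
  induction p generalizing st with
  | nil => rfl
  | cons y q ih =>
      rw [pnsExec_cons, ih]
      show (st.1 y) ::ₘ Finset.univ.val.map (Function.update st.1 y st.2) = _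
      rw [map_update_eq, map_self_eq st.1 y, Multiset.cons_swap]

end Basic

lemma Equiv.Perm.apply_inv_self {α : Type*} (f : Equiv.Perm α) (x : α) : f (f⁻¹ x) = x :=
  f.apply_symm_apply x

lemma Equiv.Perm.inv_apply_self {α : Type*} (f : Equiv.Perm α) (x : α) : f⁻¹ (f x) = x :=
  f.symm_apply_apply x



section Seg
variable {m : ℕ} {β : Type*}

/-- mid-segment state: hole at `x`, contents permuted by `u`. -/
def segSt (a : Fin m → Option β) (x : Fin m) (u : Perm (Fin m)) :
    (Fin m → Option β) × Option β :=
  ((fun i => if i = x then none else a (u i)), a (u x))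

lemma pnsStep_seg (a : Fin m → Option β) (x : Fin m) (u : Perm (Fin m)) (j : Fin m)
    (hj : j ≠ x) : pnsStep (segSt a x u) j = segSt a x (u * Equiv.swap j x) := by
  refine Prod.ext ?_ ?_
  · funext i
    by_cases hij : i = j
    · subst hij
      simp [pnsStep, segSt, hj, Equiv.swap_apply_left]
    · rw [show (pnsStep (segSt a x u) j).1 i = (segSt a x u).1 i from
        Function.update_of_ne hij _ _]
      by_cases hix : i = x
      · simp [segSt, hix]
      · simp [segSt, hix, Equiv.swap_apply_of_ne_of_ne hij hix]
  · simp [pnsStep, segSt, hj, Equiv.swap_apply_right]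

lemma pnsExec_seg (a : Fin m → Option β) (x : Fin m) (js : List (Fin m))
    (hjs : ∀ j ∈ js, j ≠ x) (u : Perm (Fin m)) :
    pnsExec (segSt a x u) js =
      segSt a x (js.foldl (fun v j => v * Equiv.swap j x) u) := by
  induction js generalizing u with
  | nil => rfl
  | cons j q ih =>
      rw [pnsExec_cons, pnsStep_seg a x u j (hjs j (List.mem_cons_self)),
        ih (fun j hj => hjs j (List.mem_cons_of_mem _ hj))]
      rfl

lemma pnsExec_segment (a : Fin m → Option β) (x : Fin m) (js : List (Fin m))
    (hjs : ∀ j ∈ js, j ≠ x) :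
    pnsExec (a, none) (x :: (js ++ [x])) =
      ((fun i => a ((js.foldl (fun v j => v * Equiv.swap j x) 1) i)), none) := by
  rw [pnsExec_cons]
  have h1 : pnsStep (a, none) x = segSt a x 1 := by
    refine Prod.ext ?_ rfl
    funext i
    by_cases hix : i = x
    · subst hix; simp [pnsStep, segSt]
    · simp [pnsStep, segSt, hix, Function.update_of_ne hix]
  rw [h1, show pnsExec (segSt a x 1) (js ++ [x]) =
      pnsExec (pnsExec (segSt a x 1) js) [x] from List.foldl_append,
    pnsExec_seg a x js hjs 1]
  set U := js.foldl (fun v j => v * Equiv.swap j x) 1 with hU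
  show pnsStep (segSt a x U) x = _
  refine Prod.ext ?_ (by simp [pnsStep, segSt])
  funext i
  by_cases hix : i = x
  · subst hix; simp [pnsStep, segSt]
  · show Function.update (segSt a x U).1 x (a (U x)) i = _
    rw [Function.update_of_ne hix]
    simp [segSt, hix]

end Seg


variable {m : ℕ}

lemma cycle_pow_apply_ne {c : Perm (Fin m)} (hc : c.IsCycle) {x : Fin m}
    (hx : x ∈ c.support) {i j : ℕ} (hi : i < orderOf c) (hj : j < orderOf c)
    (hij : i < j) : (c ^ i) x ≠ (c ^ j) x := by
  intro h
  have h2 : (c ^ (j - i)) ((c ^ i) x) = (c ^ i) x := by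
    rw [← Equiv.Perm.mul_apply, ← pow_add]
    rw [show j - i + i = j from by omega]
    exact h.symm
  have h3 : c ^ (j - i) = 1 := by
    rw [hc.pow_eq_one_iff]
    refine ⟨(c ^ i) x, ?_, h2⟩
    have : (c ^ i) x ∈ c.support := Equiv.Perm.pow_apply_mem_support.mpr hx
    exact Equiv.Perm.mem_support.mp this
  have h4 : orderOf c ∣ j - i := orderOf_dvd_of_pow_eq_one h3
  have h5 : 0 < j - i := by omega
  have := Nat.le_of_dvd h5 h4
  omega

lemma foldl_swap_spec {c : Perm (Fin m)} (hc : c.IsCycle) {x : Fin m}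
    (hx : x ∈ c.support) :
    ∀ t, t < orderOf c →
    (((List.range t).map (fun i => (c ^ (i + 1)) x)).foldl
        (fun v j => v * Equiv.swap j x) 1) x = (c ^ t) x ∧
    (∀ i < t, (((List.range t).map (fun i => (c ^ (i + 1)) x)).foldl
        (fun v j => v * Equiv.swap j x) 1) ((c ^ (i + 1)) x) = (c ^ i) x) ∧
    (∀ y, y ≠ x → (∀ i < t, (c ^ (i + 1)) x ≠ y) →
      (((List.range t).map (fun i => (c ^ (i + 1)) x)).foldl
        (fun v j => v * Equiv.swap j x) 1) y = y) := by
  intro t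
  induction t with
  | zero => intro _; refine ⟨by simp, by simp, by simp⟩
  | succ t ih =>
      intro ht
      obtain ⟨ih1, ih2, ih3⟩ := ih (by omega)
      set U := (((List.range t).map (fun i => (c ^ (i + 1)) x)).foldl
        (fun v j => v * Equiv.swap j x) 1) with hUdef
      have hsplit : (((List.range (t + 1)).map (fun i => (c ^ (i + 1)) x)).foldl
          (fun v j => v * Equiv.swap j x) 1) = U * Equiv.swap ((c ^ (t + 1)) x) x := by
        rw [List.range_succ, List.map_append, List.foldl_append]
        rfl
      rw [hsplit]
      have hne0 : ∀ i, i < orderOf c → 0 < i → (c ^ i) x ≠ x := fun i h1 h2 =>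
        (cycle_pow_apply_ne hc hx (by omega : 0 < orderOf c) h1 h2).symm
      refine ⟨?_, ?_, ?_⟩
      · rw [Equiv.Perm.mul_apply, Equiv.swap_apply_right]
        exact ih3 _ ((hne0 (t + 1) ht (by omega))) (fun i hi =>
          cycle_pow_apply_ne hc hx (by omega) ht (by omega))
      · intro i hi
        rw [Equiv.Perm.mul_apply]
        rcases Nat.lt_or_ge i t with h | h
        · rw [Equiv.swap_apply_of_ne_of_ne
            (cycle_pow_apply_ne hc hx (by omega) ht (by omega))
            (hne0 (i + 1) (by omega) (by omega))]
          exact ih2 i h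
        · have : i = t := by omega
          subst this
          rw [Equiv.swap_apply_left]
          exact ih1
      · intro y hy hall
        rw [Equiv.Perm.mul_apply,
          Equiv.swap_apply_of_ne_of_ne (fun h => hall t (by omega) h.symm) hy]
        exact ih3 y hy (fun i hi => hall i (by omega))


variable {m : ℕ} {β : Type*}

-- assume available from previous files:
lemma pnsExec_cycle (a : Fin m → Option β) (c : Perm (Fin m)) (hc : c.IsCycle)
    (x : Fin m) (hx : x ∈ c.support) :
    pnsExec (a, none) ((List.range c.support.card).map (fun i => (c ^ i) x) ++ [x]) =
      ((fun i => a (c⁻¹ i)), none) := by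
  have hord : orderOf c = c.support.card := hc.orderOf
  have hr1 : 1 ≤ c.support.card := Finset.card_pos.mpr ⟨x, hx⟩
  set r := c.support.card with hr
  have hrange : List.range r = 0 :: (List.range (r - 1)).map Nat.succ := by
    have h := List.range_succ_eq_map (n := r - 1)
    rwa [show r - 1 + 1 = r from by omega] at h
  have hplan : (List.range r).map (fun i => (c ^ i) x) =
      x :: (List.range (r - 1)).map (fun i => (c ^ (i + 1)) x) := by
    rw [hrange, List.map_cons, List.map_map]
    simp [Function.comp_def]
  rw [hplan]
  have hne0 : ∀ i, i < orderOf c → 0 < i → (c ^ i) x ≠ x := fun i h1 h2 => by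
    have := cycle_pow_apply_ne hc hx (show 0 < orderOf c by omega) h1 h2
    simpa using this.symm
  have hjs : ∀ j ∈ (List.range (r - 1)).map (fun i => (c ^ (i + 1)) x), j ≠ x := by
    intro j hj
    obtain ⟨i, hi, rfl⟩ := List.mem_map.mp hj
    have hi' : i < r - 1 := List.mem_range.mp hi
    exact hne0 (i + 1) (by omega) (by omega)
  obtain ⟨h1, h2, h3⟩ := foldl_swap_spec hc hx (r - 1) (by omega)
  set U := ((List.range (r - 1)).map (fun i => (c ^ (i + 1)) x)).foldl
      (fun v j => v * Equiv.swap j x) 1 with hU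
  have hUy : ∀ y, U y = c⁻¹ y := by
    intro y
    by_cases hys : y ∈ c.support
    · obtain ⟨i, hiy⟩ := hc.exists_pow_eq (Equiv.Perm.mem_support.mp hx)
        (Equiv.Perm.mem_support.mp hys)
      have hiy' : (c ^ (i % orderOf c)) x = y := by rw [pow_mod_orderOf]; exact hiy
      have hilt : i % orderOf c < orderOf c := Nat.mod_lt _ (by omega)
      rcases Nat.eq_zero_or_pos (i % orderOf c) with h0 | hpos
      · rw [h0] at hiy'; simp only [pow_zero, Equiv.Perm.one_apply] at hiy'
        subst hiy'
        rw [h1]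
        have hcr : c ^ (r - 1) = c⁻¹ := by
          apply eq_inv_of_mul_eq_one_left
          rw [← pow_succ]
          rw [show r - 1 + 1 = r from by omega, ← hord, pow_orderOf_eq_one]
        rw [hcr]
      · obtain ⟨j, hj⟩ : ∃ j, i % orderOf c = j + 1 := ⟨i % orderOf c - 1, by omega⟩
        rw [hj] at hiy' hilt
        subst hiy'
        rw [h2 j (by omega), pow_succ', Equiv.Perm.mul_apply, Equiv.Perm.inv_apply_self]
    · rw [h3 y (fun h => hys (h ▸ hx))
        (fun i hi h => hys (h ▸ (Equiv.Perm.pow_apply_mem_support.mpr hx)))]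
      have : y ∉ (c⁻¹).support := by rwa [Equiv.Perm.support_inv]
      exact (Equiv.Perm.notMem_support.mp this).symm
  rw [show x :: (List.range (r - 1)).map (fun i => (c ^ (i + 1)) x) ++ [x] =
      x :: ((List.range (r - 1)).map (fun i => (c ^ (i + 1)) x) ++ [x]) from rfl,
    pnsExec_segment a x _ hjs]
  exact Prod.ext (funext fun y => by show a (U y) = a (c⁻¹ y); rw [hUy]) rfl


variable {m k : ℕ} {β : Type*}

lemma upper_bound (g : Fin m → Fin k) :
    ∀ (n : ℕ) (s : Fin m → Fin k) (σ : Perm (Fin m)), σ.support.card ≤ n →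
      (∀ i, g (σ i) = s i) →
      ∃ plan, ValidPlanTyped s g plan ∧
        plan.length = σ.support.card + Multiset.card σ.cycleType := by
  intro n
  induction n with
  | zero =>
      intro s σ hcard hcons
      have hσ : σ = 1 := by
        rw [← Equiv.Perm.support_eq_empty_iff]
        exact Finset.card_eq_zero.mp (by omega)
      subst hσ
      refine ⟨[], ?_, by simp⟩
      have : s = g := funext fun i => (hcons i).symm
      subst this
      rfl
  | succ n ih =>
      intro s σ hcard hcons
      by_cases hσ : σ = 1
      · subst hσ
        refine ⟨[], ?_, by simp⟩
        have : s = g := funext fun i => (hcons i).symm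
        subst this
        rfl
      · obtain ⟨x, hx⟩ : ∃ x, σ x ≠ x := by
          by_contra h
          push_neg at h
          exact hσ (Equiv.ext h)
        set c := σ.cycleOf x with hc_def
        have hc : c.IsCycle := Equiv.Perm.isCycle_cycleOf σ hx
        have hxc : x ∈ c.support := by
          rw [Equiv.Perm.mem_support, hc_def, Equiv.Perm.cycleOf_apply_self]
          exact hx
        set σ' := σ * c⁻¹ with hσ'_def
        have hmul : σ' * c = σ := inv_mul_cancel_right σ c
        have hdisj : σ'.Disjoint c := by
          intro y
          by_cases hsc : σ.SameCycle x y
          · left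
            have hcy : c⁻¹ y = σ⁻¹ y := by
              rw [hc_def, Equiv.Perm.cycleOf_inv]
              exact Equiv.Perm.SameCycle.cycleOf_apply (Equiv.Perm.sameCycle_inv.mpr hsc)
            show σ (c⁻¹ y) = y
            rw [hcy, Equiv.Perm.apply_inv_self]
          · right
            exact Equiv.Perm.cycleOf_apply_of_not_sameCycle hsc
        have hcards : σ.support.card = σ'.support.card + c.support.card := by
          rw [← hmul]; exact hdisj.card_support_mul
        have hccard : 1 ≤ c.support.card := Finset.card_pos.mpr ⟨x, hxc⟩
        have hcons' : ∀ i, g (σ' i) = (fun i => s (c⁻¹ i)) i := fun i => hcons (c⁻¹ i)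
        obtain ⟨plan₂, hvalid₂, hlen₂⟩ := ih (fun i => s (c⁻¹ i)) σ' (by omega) hcons'
        set plan₁ := (List.range c.support.card).map (fun i => (c ^ i) x) ++ [x] with hp1
        refine ⟨plan₁ ++ plan₂, ?_, ?_⟩
        · unfold ValidPlanTyped
          rw [show pnsExec (fun i => some (s i), none) (plan₁ ++ plan₂) =
              pnsExec (pnsExec (fun i => some (s i), none) plan₁) plan₂ from
            List.foldl_append]
          rw [hp1, pnsExec_cycle (fun i => some (s i)) c hc x hxc]
          exact hvalid₂
        · have hct : σ.cycleType = σ'.cycleType + c.cycleType := by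
            rw [← hmul]; exact hdisj.cycleType_mul
          have hcc : Multiset.card c.cycleType = 1 := by
            rw [hc.cycleType]; rfl
          have hl1 : plan₁.length = c.support.card + 1 := by
            simp [hp1]
          rw [List.length_append, hl1, hlen₂, hct, Multiset.card_add, hcc, hcards]
          omega



lemma mem_take_idxOf_lt {α : Type*} [DecidableEq α] :
    ∀ (l : List α) (n : ℕ) (a : α), a ∈ l.take n → l.idxOf a < n := by
  intro l
  induction l with
  | nil => intro n a h; simp at h
  | cons b t ih =>
      intro n a h
      cases n with
      | zero => simp at h
      | succ n =>
          rcases List.mem_cons.mp h with rfl | h'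
          · simp
          · by_cases hab : a = b
            · subst hab; simp
            · rw [List.idxOf_cons_ne _ (fun h => hab h.symm)]
              exact Nat.succ_lt_succ (ih n a h')

variable {m : ℕ}

lemma lower_bound (p : List (Fin m)) (τ : Perm (Fin m))
    (hp : pnsExec ((fun i => (some i : Option (Fin m))), none) p =
      (fun i => some (τ⁻¹ i), none)) :
    τ.support.card + Multiset.card τ.cycleType ≤ p.length := by
  classical
  have hfin : ∀ i, (pnsExec ((fun i => (some i : Option (Fin m))), none) p).1 i
      = some (τ⁻¹ i) := fun i => by rw [hp]
  -- every support cell is visited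
  have claim1 : ∀ i, i ∈ τ.support → 1 ≤ p.count i := by
    intro i hi
    rcases Nat.eq_zero_or_pos (p.count i) with h0 | h
    · exfalso
      have hnm : i ∉ p := List.count_eq_zero.mp h0
      have := pnsExec_not_mem p ((fun i => (some i : Option (Fin m))), none) i hnm
      rw [hfin i] at this
      have : τ⁻¹ i = i := by injection this
      rw [Equiv.Perm.mem_support] at hi
      exact hi (by conv_lhs => rw [← this, Equiv.Perm.apply_inv_self])
    · exact h
  -- in every cycle some cell is visited twice
  have claim2 : ∀ c ∈ τ.cycleFactorsFinset, ∃ ℓ ∈ c.support, 2 ≤ p.count ℓ := by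
    intro c hc
    obtain ⟨hcyc, hcapp⟩ := Equiv.Perm.mem_cycleFactorsFinset_iff.mp hc
    have hsub : c.support ⊆ τ.support := by
      intro y hy
      rw [Equiv.Perm.mem_support, ← hcapp y hy]
      exact Equiv.Perm.mem_support.mp hy
    have hne : c.support.Nonempty := Finset.card_pos.mp (by
      have := hcyc.two_le_card_support; omega)
    obtain ⟨ℓ, hℓ, hmin⟩ := Finset.exists_min_image c.support (fun i => p.idxOf i) hne
    refine ⟨ℓ, hℓ, ?_⟩
    by_contra hcnt
    push_neg at hcnt
    have hcnt1 : p.count ℓ = 1 := le_antisymm (by omega) (claim1 ℓ (hsub hℓ))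
    have hmem : ℓ ∈ p := List.count_pos_iff.mp (by omega)
    have hidx : p.idxOf ℓ < p.length := List.idxOf_lt_length_iff.mpr hmem
    set pre := p.take (p.idxOf ℓ) with hpre
    set post := p.drop (p.idxOf ℓ + 1) with hpost
    have hsplit : p = pre ++ ℓ :: post := by
      conv_lhs => rw [← List.take_append_drop (p.idxOf ℓ) p]
      rw [List.drop_eq_getElem_cons hidx, List.getElem_idxOf hidx]
    have hℓpre : ℓ ∉ pre := fun h => by
      have := mem_take_idxOf_lt p _ ℓ h; omega
    have hℓpost : ℓ ∉ post := by
      intro h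
      have : 2 ≤ p.count ℓ := by
        rw [hsplit, List.count_append, List.count_cons_self]
        have : 1 ≤ post.count ℓ := List.count_pos_iff.mpr h
        omega
      omega
    -- the predecessor cell in the cycle
    set w := τ⁻¹ ℓ with hw
    have hcinv : c⁻¹ ℓ ∈ c.support := by
      have h1 : c⁻¹ ℓ ∈ (c⁻¹).support :=
        Equiv.Perm.apply_mem_support.mpr (by rwa [Equiv.Perm.support_inv])
      rwa [Equiv.Perm.support_inv] at h1
    have hwc : w = c⁻¹ ℓ := by
      have : τ (c⁻¹ ℓ) = ℓ := by
        rw [← hcapp _ hcinv, Equiv.Perm.apply_inv_self]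
      rw [hw, Equiv.Perm.inv_eq_iff_eq]
      exact this.symm
    have hwsupp : w ∈ c.support := hwc ▸ hcinv
    have hwne : w ≠ ℓ := by
      rw [hwc]
      intro h
      have : c ℓ = ℓ := by conv_lhs => rw [← h, Equiv.Perm.apply_inv_self]
      exact Equiv.Perm.mem_support.mp hℓ this
    have hwpre : w ∉ pre := by
      intro h
      have h1 := mem_take_idxOf_lt p _ w h
      have h2 := hmin w hwsupp
      omega
    set st1 := pnsExec ((fun i => (some i : Option (Fin m))), none) pre with hst1
    have hstw : st1.1 w = some w :=
      pnsExec_not_mem pre ((fun i => (some i : Option (Fin m))), none) w hwpre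
    have hinv := pnsExec_inv pre ((fun i => (some i : Option (Fin m))), none)
    have hnodup : (st1.2 ::ₘ Finset.univ.val.map st1.1).Nodup := by
      rw [← hst1] at hinv
      rw [hinv]
      refine Multiset.nodup_cons.mpr ⟨?_, ?_⟩
      · intro h
        obtain ⟨i, _, hi⟩ := Multiset.mem_map.mp h
        simp at hi
      · exact Multiset.Nodup.map (Option.some_injective _) Finset.univ.nodup
    have hhand : st1.2 ≠ some w := by
      intro h
      have hmem2 : st1.2 ∈ Finset.univ.val.map st1.1 := by
        rw [h, ← hstw]
        exact Multiset.mem_map.mpr ⟨w, Finset.mem_univ_val w, rfl⟩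
      exact (Multiset.nodup_cons.mp hnodup).1 hmem2
    -- final content of ℓ is the hand content at its unique visit
    have hfinℓ : (pnsExec ((fun i => (some i : Option (Fin m))), none) p).1 ℓ = st1.2 := by
      conv_lhs => rw [hsplit]
      rw [pnsExec_append, pnsExec_cons, ← hst1,
        pnsExec_not_mem post _ ℓ hℓpost]
      show Function.update st1.1 ℓ st1.2 ℓ = st1.2
      simp
    rw [hfin ℓ] at hfinℓ
    exact hhand (by rw [← hfinℓ, hw])
  -- assemble the counting
  choose L hL1 hL2 using claim2
  have hdisj : (↑τ.cycleFactorsFinset : Set (Perm (Fin m))).PairwiseDisjoint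
      Equiv.Perm.support := by
    intro a ha b hb hab
    exact (Equiv.Perm.cycleFactorsFinset_pairwise_disjoint τ ha hb hab).disjoint_support
  have hsubsup : ∀ c ∈ τ.cycleFactorsFinset, c.support ⊆ τ.support := by
    intro c hc y hy
    obtain ⟨hcyc, hcapp⟩ := Equiv.Perm.mem_cycleFactorsFinset_iff.mp hc
    rw [Equiv.Perm.mem_support, ← hcapp y hy]
    exact Equiv.Perm.mem_support.mp hy
  have hinner : ∀ c ∈ τ.cycleFactorsFinset,
      c.support.card + 1 ≤ ∑ i ∈ c.support, p.count i := by
    intro c hc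
    have h1 : ∑ i ∈ c.support.erase (L c hc), 1 ≤
        ∑ i ∈ c.support.erase (L c hc), p.count i :=
      Finset.sum_le_sum (fun i hi =>
        claim1 i (hsubsup c hc (Finset.mem_of_mem_erase hi)))
    have h2 : (∑ i ∈ c.support.erase (L c hc), p.count i) + p.count (L c hc) =
        ∑ i ∈ c.support, p.count i :=
      Finset.sum_erase_add c.support (fun i => p.count i) (hL1 c hc)
    have h3 : (c.support.erase (L c hc)).card = c.support.card - 1 :=
      Finset.card_erase_of_mem (hL1 c hc)
    have h4 : 1 ≤ c.support.card := Finset.card_pos.mpr ⟨_, hL1 c hc⟩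
    have h5 := hL2 c hc
    have h6 : ∑ i ∈ c.support.erase (L c hc), 1 = (c.support.erase (L c hc)).card :=
      (Finset.card_eq_sum_ones _).symm
    omega
  have hstep1 : ∑ c ∈ τ.cycleFactorsFinset, (c.support.card + 1) ≤
      ∑ c ∈ τ.cycleFactorsFinset, ∑ i ∈ c.support, p.count i :=
    Finset.sum_le_sum hinner
  have hstep2 : ∑ c ∈ τ.cycleFactorsFinset, ∑ i ∈ c.support, p.count i =
      ∑ i ∈ τ.cycleFactorsFinset.biUnion Equiv.Perm.support, p.count i :=
    (Finset.sum_biUnion hdisj).symm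
  have hstep3 : ∑ i ∈ τ.cycleFactorsFinset.biUnion Equiv.Perm.support, p.count i ≤
      ∑ i ∈ Finset.univ, p.count i :=
    Finset.sum_le_sum_of_subset (Finset.subset_univ _)
  have hlen : ∑ i ∈ Finset.univ, p.count i = p.length := by
    have h1 := Multiset.toFinset_sum_count_eq (↑p : Multiset (Fin m))
    have h2 : ∑ i ∈ Finset.univ, Multiset.count i (↑p : Multiset (Fin m)) =
        ∑ i ∈ (↑p : Multiset (Fin m)).toFinset,
          Multiset.count i (↑p : Multiset (Fin m)) := by
      refine (Finset.sum_subset (Finset.subset_univ _) ?_).symm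
      intro i _ hi
      exact Multiset.count_eq_zero.mpr (fun h => hi (Multiset.mem_toFinset.mpr h))
    simp only [Multiset.coe_count] at h1 h2
    rw [h2, h1, Multiset.coe_card]
  have hsum1 : ∑ c ∈ τ.cycleFactorsFinset, c.support.card = τ.support.card := by
    rw [← Equiv.Perm.sum_cycleType, Equiv.Perm.cycleType_def]
    rfl
  have hsum2 : Multiset.card τ.cycleType = τ.cycleFactorsFinset.card := by
    rw [Equiv.Perm.cycleType_def, Multiset.card_map]
    rfl
  have hsum3 : ∑ c ∈ τ.cycleFactorsFinset, (c.support.card + 1) =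
      τ.support.card + τ.cycleFactorsFinset.card := by
    rw [Finset.sum_add_distrib, hsum1, Finset.sum_const, smul_eq_mul, mul_one]
  omega

-- MAIN

lemma exists_perm_of_map_eq {m : ℕ} (A : Fin m → Option (Fin m))
    (hA : Finset.univ.val.map A = Finset.univ.val.map (fun i => (some i : Option (Fin m)))) :
    ∃ π : Equiv.Perm (Fin m), ∀ i, A i = some (π i) := by
  classical
  have hsome : ∀ i, ∃ j, A i = some j := by
    intro i
    have : A i ∈ Finset.univ.val.map A :=
      Multiset.mem_map.mpr ⟨i, Finset.mem_univ_val i, rfl⟩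
    rw [hA] at this
    obtain ⟨j, _, hj⟩ := Multiset.mem_map.mp this
    exact ⟨j, hj.symm⟩
  choose pf hpf using hsome
  have hmapA : Finset.univ.val.map A =
      Multiset.map (fun j => (some j : Option (Fin m))) (Finset.univ.val.map pf) := by
    rw [Multiset.map_map]
    exact Multiset.map_congr rfl (fun i _ => hpf i)
  have hsome_univ : Finset.univ.val.map (fun i => (some i : Option (Fin m))) =
      Multiset.map (fun j => (some j : Option (Fin m))) Finset.univ.val := rfl
  have hmaps : Finset.univ.val.map pf = Finset.univ.val := by
    apply Multiset.map_injective (Option.some_injective (Fin m))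
    rw [← hmapA, hA, hsome_univ]
  have hinj : Function.Injective pf := by
    intro a b hab
    have hnodup : (Finset.univ.val.map pf).Nodup := by rw [hmaps]; exact Finset.univ.nodup
    exact Multiset.inj_on_of_nodup_map hnodup a (Finset.mem_univ_val a)
      b (Finset.mem_univ_val b) hab
  refine ⟨Equiv.ofBijective pf (Finite.injective_iff_bijective.mp hinj), fun i => hpf i⟩

lemma exists_consistent {m k : ℕ} (s g : Fin m → Fin k)
    (hcount : ∀ t : Fin k,
      (Finset.univ.filter (fun i : Fin m => s i = t)).card =
      (Finset.univ.filter (fun i : Fin m => g i = t)).card) :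
    ∃ σ : Equiv.Perm (Fin m), ∀ i, g (σ i) = s i := by
  classical
  have hcard : ∀ t, Fintype.card {i // s i = t} = Fintype.card {i // g i = t} := by
    intro t
    rw [Fintype.card_subtype, Fintype.card_subtype]
    exact hcount t
  let e : ∀ t, {i // s i = t} ≃ {i // g i = t} := fun t => Fintype.equivOfCardEq (hcard t)
  refine ⟨(Equiv.sigmaFiberEquiv s).symm.trans
    ((Equiv.sigmaCongrRight e).trans (Equiv.sigmaFiberEquiv g)), fun i => ?_⟩
  show g ((Equiv.sigmaFiberEquiv g)
    ((Equiv.sigmaCongrRight e) ((Equiv.sigmaFiberEquiv s).symm i))) = s i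
  have h1 : ∀ (x : Σ t, {i // s i = t}),
      g ((Equiv.sigmaFiberEquiv g) ((Equiv.sigmaCongrRight e) x)) = x.1 := by
    rintro ⟨t, x⟩
    exact (e t x).2
  rw [h1]
  rfl

/-- In the partially-labeled pick-n-swap model, the minimum number of pick-n-swap
operations over all valid plans equals the minimum, over all type-consistent
permutations `σ` (those with `g (σ i) = s i` for all `i`), of
`σ.support.card + σ.cycleType.card`. -/
theorem min_pick_n_swaps_typed {m k : ℕ} (hm : 1 ≤ m) (hk : 1 ≤ k)
    (s g : Fin m → Fin k)
    (hcount : ∀ t : Fin k,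
      (Finset.univ.filter (fun i : Fin m => s i = t)).card =
      (Finset.univ.filter (fun i : Fin m => g i = t)).card) :
    IsLeast {N : ℕ | ∃ plan : List (Fin m), ValidPlanTyped s g plan ∧ plan.length = N}
      (sInf {n : ℕ | ∃ σ : Equiv.Perm (Fin m), (∀ i, g (σ i) = s i) ∧
        n = σ.support.card + Multiset.card σ.cycleType}) := by
  classical
  set SS := {n : ℕ | ∃ σ : Equiv.Perm (Fin m), (∀ i, g (σ i) = s i) ∧
      n = σ.support.card + Multiset.card σ.cycleType} with hSSdef
  have hSSne : SS.Nonempty := by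
    obtain ⟨σ₀, hσ₀⟩ := exists_consistent s g hcount
    exact ⟨_, σ₀, hσ₀, rfl⟩
  obtain ⟨σmin, hmincons, hminEq⟩ := Nat.sInf_mem hSSne
  constructor
  · -- the optimum is attained by a plan
    obtain ⟨plan, hval, hlen⟩ := upper_bound g σmin.support.card s σmin le_rfl hmincons
    exact ⟨plan, hval, by rw [hlen, ← hminEq]⟩
  · -- every plan length is at least the optimum
    rintro N ⟨p, hval, rfl⟩
    have hmap := pnsExec_map s p ((fun i => (some i : Option (Fin m))), none)
    set st := pnsExec ((fun i => (some i : Option (Fin m))), none) p with hst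
    have hmap' : pnsExec (fun i => some (s i), none) p =
        ((fun i => (st.1 i).map s), st.2.map s) := hmap
    rw [hval] at hmap'
    have h2 : st.2 = none := Option.map_eq_none_iff.mp (congrArg Prod.snd hmap').symm
    have h1 : ∀ i, (st.1 i).map s = some (g i) := by
      intro i
      have := congrArg Prod.fst hmap'
      exact (congrFun this i).symm
    have hinv := pnsExec_inv p ((fun i => (some i : Option (Fin m))), none)
    rw [← hst, h2] at hinv
    have hmulti : Finset.univ.val.map st.1 =
        Finset.univ.val.map (fun i => (some i : Option (Fin m))) := by
      have := hinv
      rwa [Multiset.cons_inj_right] at this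
    obtain ⟨π, hπ⟩ := exists_perm_of_map_eq st.1 hmulti
    have hsg : ∀ i, s (π i) = g i := by
      intro i
      have := h1 i
      rw [hπ i, Option.map_some] at this
      injection this
    have hp : pnsExec ((fun i => (some i : Option (Fin m))), none) p =
        (fun i => some ((π⁻¹)⁻¹ i), none) := by
      rw [← hst]
      refine Prod.ext (funext fun i => ?_) h2
      rw [inv_inv]
      exact hπ i
    have hLB := lower_bound p π⁻¹ hp
    have hmem : π⁻¹.support.card + Multiset.card π⁻¹.cycleType ∈ SS := by
      refine ⟨π⁻¹, fun i => ?_, rfl⟩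
      have h := hsg (π⁻¹ i)
      rw [Equiv.Perm.apply_inv_self] at h
      exact h.symm
    exact le_trans (Nat.sInf_le hmem) hLB
end

section
/- Fix m ≥ 1, k ≥ 1 and type assignments s, g : Fin m → Fin k with equal counts for every type. In the partially-labeled one-dimensional pick-n-swap model, every valid plan transforming the typed arrangement s into the typed arrangement g has total end-effector travel at least Σ_{j=0}^{m−1} Σ_{t : Fin k} |#{i : (i : ℕ) ≤ j ∧ s i = t} − #{i : (i : ℕ) ≤ j ∧ g i = t}|. -/
/-- crossing indicator of cut `j` by move `p → q` -/
def crossX {m : ℕ} (j : ℕ) (p q : Fin m) : ℤ :=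
  if ((p : ℕ) ≤ j ↔ (q : ℕ) ≤ j) then 0 else 1

lemma crossX_nonneg {m : ℕ} (j : ℕ) (p q : Fin m) : 0 ≤ crossX j p q := by
  unfold crossX; split <;> norm_num

lemma abs_eq_sum_crossX {m : ℕ} (p q : Fin m) :
    |((p : ℕ) : ℤ) - ((q : ℕ) : ℤ)| = ∑ j ∈ Finset.range m, crossX j p q := by
  have hp := p.isLt
  have hq := q.isLt
  unfold crossX
  have h1 : ∀ j : ℕ, (if ((p : ℕ) ≤ j ↔ (q : ℕ) ≤ j) then (0:ℤ) else 1)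
      = (if ¬((p : ℕ) ≤ j ↔ (q : ℕ) ≤ j) then (1:ℤ) else 0) := by
    intro j; by_cases h : ((p : ℕ) ≤ j ↔ (q : ℕ) ≤ j) <;> simp [h]
  simp only [h1]
  rw [Finset.sum_boole]
  have h2 : (Finset.range m).filter (fun j => ¬((p : ℕ) ≤ j ↔ (q : ℕ) ≤ j))
      = Finset.Ico (min (p:ℕ) (q:ℕ)) (max (p:ℕ) (q:ℕ)) := by
    ext j
    simp only [Finset.mem_filter, Finset.mem_range, Finset.mem_Ico, le_max_iff, min_le_iff]
    omega
  rw [h2]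
  simp only [Finset.sum_const, Nat.card_Ico, smul_eq_mul, mul_one]
  rcases le_total ((p:ℕ)) ((q:ℕ)) with h | h
  · have h' : ((p:ℕ):ℤ) - ((q:ℕ):ℤ) ≤ 0 := by omega
    rw [abs_of_nonpos h']; push_cast; omega
  · have h' : (0:ℤ) ≤ ((p:ℕ):ℤ) - ((q:ℕ):ℤ) := by omega
    rw [abs_of_nonneg h']; push_cast; omega

/-- potential: count of items of type `t` in the prefix `≤ j`, plus the held
item if the hand is at position `pos ≤ j`. -/
def fcnt {m k : ℕ} (j : ℕ) (a : Fin m → Option (Fin k)) (h : Option (Fin k))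
    (pos : ℕ) (t : Fin k) : ℤ :=
  (∑ i : Fin m, if ((i : ℕ) ≤ j ∧ a i = some t) then (1:ℤ) else 0)
    + (if (pos ≤ j ∧ h = some t) then 1 else 0)

lemma fcnt_step {m k : ℕ} (j : ℕ) (a : Fin m → Option (Fin k))
    (h : Option (Fin k)) (ℓ : Fin m) (t : Fin k) :
    fcnt j (Function.update a ℓ h) (a ℓ) (ℓ : ℕ) t = fcnt j a h (ℓ : ℕ) t := by
  unfold fcnt
  rw [← Finset.add_sum_erase _ _ (Finset.mem_univ ℓ),
      ← Finset.add_sum_erase _ (fun i : Fin m => if ((i : ℕ) ≤ j ∧ a i = some t) then (1:ℤ) else 0)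
        (Finset.mem_univ ℓ)]
  have herase : ∑ i ∈ Finset.univ.erase ℓ,
      (if ((i : ℕ) ≤ j ∧ Function.update a ℓ h i = some t) then (1:ℤ) else 0)
      = ∑ i ∈ Finset.univ.erase ℓ, (if ((i : ℕ) ≤ j ∧ a i = some t) then (1:ℤ) else 0) := by
    refine Finset.sum_congr rfl fun i hi => ?_
    rw [Function.update_of_ne (Finset.ne_of_mem_erase hi)]
  rw [herase, Function.update_self]
  ring

lemma fcnt_move {m k : ℕ} (j : ℕ) (a : Fin m → Option (Fin k))
    (h : Option (Fin k)) (p q : Fin m) :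
    ∑ t : Fin k, |fcnt j a h (q : ℕ) t - fcnt j a h (p : ℕ) t| ≤ crossX j p q := by
  unfold fcnt
  simp only [add_sub_add_left_eq_sub]
  cases h with
  | none => simpa using crossX_nonneg j p q
  | some u =>
    rw [Finset.sum_eq_single u]
    · simp only [Option.some.injEq]
      unfold crossX
      split_ifs with h1 h2 h3 <;> simp_all <;> omega
    · intro b _ hb
      simp [Option.some.injEq, hb.symm]
    · intro hu; exact absurd (Finset.mem_univ u) hu

lemma sum_abs_triangle {k : ℕ} (x y z : Fin k → ℤ) :
    ∑ t : Fin k, |x t - z t| ≤ (∑ t : Fin k, |x t - y t|) + ∑ t : Fin k, |y t - z t| := by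
  rw [← Finset.sum_add_distrib]
  exact Finset.sum_le_sum fun t _ => abs_sub_le _ _ _

lemma chain_bound {m k : ℕ} (j : ℕ) :
    ∀ (l : List (Fin m)) (st : (Fin m → Option (Fin k)) × Option (Fin k)) (p q : Fin m),
      ∑ t : Fin k, |fcnt j (pnsExec st l).1 (pnsExec st l).2 (q : ℕ) t
          - fcnt j st.1 st.2 (p : ℕ) t| ≤
        (((p :: l).zip (l ++ [q])).map (fun pq => crossX j pq.1 pq.2)).sum := by
  intro l
  induction l with
  | nil =>
    intro st p q
    simpa [pnsExec] using fcnt_move j st.1 st.2 p q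
  | cons ℓ l' ih =>
    intro st p q
    have hexec : pnsExec st (ℓ :: l') = pnsExec (pnsStep st ℓ) l' := rfl
    have h1 := ih (pnsStep st ℓ) ℓ q
    have h2 : fcnt j (pnsStep st ℓ).1 (pnsStep st ℓ).2 (ℓ : ℕ)
        = fcnt j st.1 st.2 (ℓ : ℕ) := by
      funext t; exact fcnt_step j st.1 st.2 ℓ t
    rw [h2] at h1
    have h3 := fcnt_move j st.1 st.2 p ℓ
    have htri := sum_abs_triangle
      (fun t => fcnt j (pnsExec st (ℓ :: l')).1 (pnsExec st (ℓ :: l')).2 (q : ℕ) t)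
      (fun t => fcnt j st.1 st.2 (ℓ : ℕ) t)
      (fun t => fcnt j st.1 st.2 (p : ℕ) t)
    have hzip : (((p :: ℓ :: l').zip ((ℓ :: l') ++ [q])).map
        (fun pq => crossX j pq.1 pq.2)).sum
        = crossX j p ℓ + (((ℓ :: l').zip (l' ++ [q])).map (fun pq => crossX j pq.1 pq.2)).sum := by
      simp [List.zip]
    rw [hexec] at htri
    rw [hzip, hexec]
    linarith [htri, h1, h3]

lemma fcnt_init {m k : ℕ} (j : ℕ) (f : Fin m → Fin k) (pos : ℕ) (t : Fin k) :
    fcnt j (fun i => some (f i)) none pos t = prefCount f j t := by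
  unfold fcnt prefCount
  simp only [Option.some.injEq, and_false, if_false, add_zero, reduceCtorEq]
  rw [Finset.sum_boole]

lemma sum_crossX_eq {m : ℕ} :
    ∀ L : List (Fin m × Fin m),
      ∑ j ∈ Finset.range m, (L.map (fun pq => crossX j pq.1 pq.2)).sum
        = (L.map (fun pq => |((pq.1 : ℕ) : ℤ) - ((pq.2 : ℕ) : ℤ)|)).sum := by
  intro L
  induction L with
  | nil => simp
  | cons x L ih =>
    simp only [List.map_cons, List.sum_cons, Finset.sum_add_distrib, ih,
      abs_eq_sum_crossX]

/-- In the partially-labeled one-dimensional pick-n-swap model, every valid plan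
transforming `s` into `g` has total end-effector travel at least the total
prefix-count discrepancy between `s` and `g`. -/
theorem typed_travel_lower_bound {m k : ℕ} (hm : 0 < m) (hk : 1 ≤ k)
    (s g : Fin m → Fin k)
    (hcount : ∀ t : Fin k,
      (Finset.univ.filter (fun i : Fin m => s i = t)).card =
      (Finset.univ.filter (fun i : Fin m => g i = t)).card)
    (plan : List (Fin m)) (hplan : ValidPlanTyped s g plan) :
    (∑ j ∈ Finset.range m, ∑ t : Fin k, |prefCount s j t - prefCount g j t|) ≤
      travel1D hm plan := by
  set z : Fin m := ⟨0, hm⟩ with hz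
  have key : ∀ j, (∑ t : Fin k, |prefCount s j t - prefCount g j t|) ≤
      (((z :: plan).zip (plan ++ [z])).map (fun pq => crossX j pq.1 pq.2)).sum := by
    intro j
    have h := chain_bound j plan ((fun i => some (s i)), none) z z
    rw [hplan] at h
    simp only [fcnt_init] at h
    have : ∀ t : Fin k, |prefCount s j t - prefCount g j t|
        = |prefCount g j t - prefCount s j t| := fun t => abs_sub_comm _ _
    simp only [this]
    exact h
  calc (∑ j ∈ Finset.range m, ∑ t : Fin k, |prefCount s j t - prefCount g j t|)
      ≤ ∑ j ∈ Finset.range m,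
        (((z :: plan).zip (plan ++ [z])).map (fun pq => crossX j pq.1 pq.2)).sum :=
        Finset.sum_le_sum fun j _ => key j
    _ = travel1D hm plan := sum_crossX_eq _
end

section
/- Fix m₁, m₂ ≥ 1 and a permutation π of Fin m₁ × Fin m₂. Every valid plan for π in the two-dimensional pick-n-swap model on the m₁ × m₂ lattice has total end-effector travel at least Σ_{q : Fin m₁ × Fin m₂} dist(π⁻¹ q, q), where dist((r,c),(r',c')) = √(((r:ℕ) − (r':ℕ))² + ((c:ℕ) − (c':ℕ))²) is the Euclidean distance between lattice cells. -/
/-- Euclidean distance between two cells of an `m₁ × m₂` lattice. -/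
noncomputable def dist2D {m₁ m₂ : ℕ} (p q : Fin m₁ × Fin m₂) : ℝ :=
  Real.sqrt ((((p.1 : ℕ) : ℝ) - ((q.1 : ℕ) : ℝ)) ^ 2 +
    (((p.2 : ℕ) : ℝ) - ((q.2 : ℕ) : ℝ)) ^ 2)

/-- Total end-effector travel of a 2D plan `p₁, …, p_N`: the sum of
`dist(p_j, p_{j+1})` for `j = 0, …, N`, where `p₀ = p_{N+1} = (0,0)` is the rest
position (the top-left cell). -/
noncomputable def travel2D {m₁ m₂ : ℕ} (h₁ : 0 < m₁) (h₂ : 0 < m₂)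
    (plan : List (Fin m₁ × Fin m₂)) : ℝ :=
  ((((⟨0, h₁⟩, ⟨0, h₂⟩) :: plan).zip (plan ++ [((⟨0, h₁⟩, ⟨0, h₂⟩) : Fin m₁ × Fin m₂)])).map
    (fun pq => dist2D pq.1 pq.2)).sum

lemma dist2D_eq_dist {m₁ m₂ : ℕ} (p q : Fin m₁ × Fin m₂) :
    dist2D p q = dist (Complex.mk (p.1 : ℕ) (p.2 : ℕ)) (Complex.mk (q.1 : ℕ) (q.2 : ℕ)) := by
  rw [Complex.dist_eq, Complex.norm_def, Complex.normSq_apply]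
  simp [dist2D, sq]

lemma dist2D_nonneg {m₁ m₂ : ℕ} (p q : Fin m₁ × Fin m₂) : 0 ≤ dist2D p q := by
  rw [dist2D_eq_dist]; exact dist_nonneg

lemma dist2D_self {m₁ m₂ : ℕ} (p : Fin m₁ × Fin m₂) : dist2D p p = 0 := by
  rw [dist2D_eq_dist]; exact dist_self _

lemma dist2D_triangle {m₁ m₂ : ℕ} (p ℓ q : Fin m₁ × Fin m₂) :
    dist2D p q ≤ dist2D p ℓ + dist2D ℓ q := by
  rw [dist2D_eq_dist, dist2D_eq_dist, dist2D_eq_dist]; exact dist_triangle _ _ _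

/-- Potential: total distance of all items from their goal cells. -/
noncomputable def phi2D {m₁ m₂ : ℕ}
    (st : ((Fin m₁ × Fin m₂) → Option (Fin m₁ × Fin m₂)) × Option (Fin m₁ × Fin m₂))
    (p : Fin m₁ × Fin m₂) : ℝ :=
  (∑ c : Fin m₁ × Fin m₂, (st.1 c).elim 0 (fun q => dist2D c q)) +
    (st.2).elim 0 (fun q => dist2D p q)

lemma phi2D_step {m₁ m₂ : ℕ}
    (st : ((Fin m₁ × Fin m₂) → Option (Fin m₁ × Fin m₂)) × Option (Fin m₁ × Fin m₂))
    (p ℓ : Fin m₁ × Fin m₂) :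
    phi2D st p ≤ dist2D p ℓ + phi2D (pnsStep st ℓ) ℓ := by
  unfold phi2D pnsStep
  simp only
  have hsum : ∀ g : (Fin m₁ × Fin m₂) → Option (Fin m₁ × Fin m₂),
      (∑ c : Fin m₁ × Fin m₂, (g c).elim 0 (fun q => dist2D c q)) =
      (g ℓ).elim 0 (fun q => dist2D ℓ q) +
        ∑ c ∈ Finset.univ.erase ℓ, (g c).elim 0 (fun q => dist2D c q) := by
    intro g
    rw [← Finset.add_sum_erase _ _ (Finset.mem_univ ℓ)]
  rw [hsum st.1, hsum (Function.update st.1 ℓ st.2)]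
  have herase : ∑ c ∈ Finset.univ.erase ℓ, (Function.update st.1 ℓ st.2 c).elim 0
      (fun q => dist2D c q) = ∑ c ∈ Finset.univ.erase ℓ, (st.1 c).elim 0 (fun q => dist2D c q) := by
    apply Finset.sum_congr rfl
    intro c hc
    rw [Function.update_of_ne (Finset.ne_of_mem_erase hc)]
  rw [herase, Function.update_self]
  have hh : (st.2).elim 0 (fun q => dist2D p q) ≤
      dist2D p ℓ + (st.2).elim 0 (fun q => dist2D ℓ q) := by
    cases st.2 with
    | none => simpa using dist2D_nonneg p ℓ
    | some q => exact dist2D_triangle p ℓ q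
  linarith [hh]

noncomputable def segSum {m₁ m₂ : ℕ} (p : Fin m₁ × Fin m₂)
    (plan : List (Fin m₁ × Fin m₂)) : ℝ :=
  match plan with
  | [] => 0
  | ℓ :: rest => dist2D p ℓ + segSum ℓ rest

lemma phi2D_exec {m₁ m₂ : ℕ} (plan : List (Fin m₁ × Fin m₂)) :
    ∀ (st : ((Fin m₁ × Fin m₂) → Option (Fin m₁ × Fin m₂)) × Option (Fin m₁ × Fin m₂))
      (p : Fin m₁ × Fin m₂),
    phi2D st p ≤ segSum p plan + phi2D (pnsExec st plan) (plan.getLastD p) := by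
  induction plan with
  | nil => intro st p; simp [segSum, pnsExec]
  | cons ℓ rest ih =>
    intro st p
    have h1 := phi2D_step st p ℓ
    have h2 := ih (pnsStep st ℓ) ℓ
    have : pnsExec st (ℓ :: rest) = pnsExec (pnsStep st ℓ) rest := rfl
    rw [this, List.getLastD_cons]
    simp only [segSum]
    linarith

lemma travel2D_eq {m₁ m₂ : ℕ} :
    ∀ (plan : List (Fin m₁ × Fin m₂)) (a b : Fin m₁ × Fin m₂),
    (((a :: plan).zip (plan ++ [b])).map (fun pq => dist2D pq.1 pq.2)).sum =
      segSum a plan + dist2D (plan.getLastD a) b := by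
  intro plan
  induction plan with
  | nil => intro a b; simp [segSum]
  | cons x xs ih =>
    intro a b
    simp only [List.cons_append, List.zip_cons_cons, List.map_cons, List.sum_cons,
      List.getLastD_cons, segSum]
    rw [ih x b]
    ring

/-- Every valid plan for `π` in the two-dimensional pick-n-swap model has total
end-effector travel at least `Σ_q dist(π⁻¹ q, q)`. -/
theorem travel_lower_bound_2D {m₁ m₂ : ℕ} (h₁ : 0 < m₁) (h₂ : 0 < m₂)
    (π : Equiv.Perm (Fin m₁ × Fin m₂)) (plan : List (Fin m₁ × Fin m₂))
    (hplan : ValidPlan π plan) :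
    (∑ q : Fin m₁ × Fin m₂, dist2D (π⁻¹ q) q) ≤ travel2D h₁ h₂ plan := by
  set o : Fin m₁ × Fin m₂ := (⟨0, h₁⟩, ⟨0, h₂⟩) with ho
  have hstart : phi2D ((fun i => some (π i), none) :
      ((Fin m₁ × Fin m₂) → Option (Fin m₁ × Fin m₂)) × Option (Fin m₁ × Fin m₂)) o =
      ∑ q : Fin m₁ × Fin m₂, dist2D (π⁻¹ q) q := by
    unfold phi2D
    simp only [Option.elim, add_zero]
    rw [← Equiv.sum_comp π (fun q => dist2D (π⁻¹ q) q)]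
    apply Finset.sum_congr rfl
    intro c _
    simp
  have hgoal : ∀ p : Fin m₁ × Fin m₂, phi2D ((fun i => some i, none) :
      ((Fin m₁ × Fin m₂) → Option (Fin m₁ × Fin m₂)) × Option (Fin m₁ × Fin m₂)) p = 0 := by
    intro p
    unfold phi2D
    simp [dist2D_self]
  have key := phi2D_exec plan (fun i => some (π i), none) o
  rw [hplan, hgoal, hstart] at key
  have htr : travel2D h₁ h₂ plan = segSum o plan + dist2D (plan.getLastD o) o :=
    travel2D_eq plan o o
  have := dist2D_nonneg (plan.getLastD o) o
  linarith
end

section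
/- For every m₁, m₂ ≥ 1, the expected total Euclidean displacement of a uniformly random permutation π of the cells of an m₁ × m₂ lattice satisfies (1/(m₁m₂)!) · Σ_{π ∈ Equiv.Perm (Fin m₁ × Fin m₂)} Σ_{p} dist(π p, p) ≥ m₂ · (m₁² − 1)/3, where dist((r,c),(r',c')) = √(((r:ℕ) − (r':ℕ))² + ((c:ℕ) − (c':ℕ))²). -/
open Finset

/-- Sum over all permutations of a function of `π p` equals `(card α - 1)!` times
the sum over all values. -/
lemma perm_sum_apply {α : Type*} [DecidableEq α] [Fintype α] (p : α) (f : α → ℝ) :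
    ∑ π : Equiv.Perm α, f (π p) =
      (Nat.factorial (Fintype.card α - 1) : ℝ) * ∑ q : α, f q := by
  classical
  let β := {y : α // y ≠ p}
  let g : Option β ≃ α := Equiv.optionSubtypeNe p
  let E : Equiv.Perm α ≃ Option β × Equiv.Perm β :=
    (Equiv.permCongr g.symm).trans Equiv.Perm.decomposeOption
  have hE : ∀ π : Equiv.Perm α, (E π).1 = g.symm (π p) := by
    intro π
    simp only [E, Equiv.trans_apply, Equiv.Perm.decomposeOption_apply, Equiv.permCongr_apply,
      Equiv.symm_symm, Equiv.optionSubtypeNe_none]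
    rfl
  have h1 : ∑ π : Equiv.Perm α, f (π p)
      = ∑ x : Option β × Equiv.Perm β, f (g x.1) := by
    refine Fintype.sum_equiv E _ _ ?_
    intro π
    rw [hE]
    simp
  rw [h1, Fintype.sum_prod_type]
  have h2 : ∀ o : Option β, ∑ _σ : Equiv.Perm β, f (g o)
      = (Fintype.card (Equiv.Perm β) : ℝ) * f (g o) := by
    intro o; rw [Finset.sum_const, nsmul_eq_mul]; simp
  simp only [h2]
  rw [← Finset.mul_sum]
  have hcardβ : Fintype.card β = Fintype.card α - 1 := by
    have h := Fintype.card_subtype_compl (fun y : α => y = p)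
    rw [Fintype.card_subtype_eq] at h
    exact h
  have : Fintype.card (Equiv.Perm β) = Nat.factorial (Fintype.card α - 1) := by
    rw [Fintype.card_perm, hcardβ]
  rw [this]
  congr 1
  exact (Equiv.sum_comp g fun q => f q)

lemma sum_range_cast (n : ℕ) : ∑ i ∈ Finset.range n, (i : ℝ) = n * (n - 1) / 2 := by
  induction n with
  | zero => simp
  | succ n ih => rw [Finset.sum_range_succ, ih]; push_cast; ring

lemma sum_abs_diff (n : ℕ) :
    ∑ i ∈ Finset.range n, ∑ j ∈ Finset.range n, |(i : ℝ) - j| = n * (n ^ 2 - 1) / 3 := by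
  induction n with
  | zero => simp
  | succ n ih =>
    have key : ∀ i ∈ Finset.range n, |(i : ℝ) - n| = n - i := by
      intro i hi
      rw [abs_sub_comm, abs_of_nonneg]
      have := Finset.mem_range.mp hi
      have : (i : ℝ) ≤ n := by exact_mod_cast this.le
      linarith
    have key2 : ∀ j ∈ Finset.range n, |(n : ℝ) - j| = n - j := by
      intro j hj
      rw [abs_of_nonneg]
      have := Finset.mem_range.mp hj
      have : (j : ℝ) ≤ n := by exact_mod_cast this.le
      linarith
    have hsum : ∑ i ∈ Finset.range n, ((n : ℝ) - i) = n * n - n * (n - 1) / 2 := by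
      rw [Finset.sum_sub_distrib, Finset.sum_const, sum_range_cast]
      simp [nsmul_eq_mul]
    calc ∑ i ∈ Finset.range (n + 1), ∑ j ∈ Finset.range (n + 1), |(i : ℝ) - j|
        = ∑ i ∈ Finset.range (n + 1),
            ((∑ j ∈ Finset.range n, |(i : ℝ) - j|) + |(i : ℝ) - n|) := by
          simp [Finset.sum_range_succ]
      _ = (∑ i ∈ Finset.range n, ∑ j ∈ Finset.range n, |(i : ℝ) - j|)
            + (∑ j ∈ Finset.range n, |(n : ℝ) - j|)
            + ((∑ i ∈ Finset.range n, |(i : ℝ) - n|) + |(n : ℝ) - n|) := by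
          rw [Finset.sum_add_distrib, Finset.sum_range_succ, Finset.sum_range_succ]
      _ = n * (n ^ 2 - 1) / 3 + (n * n - n * (n - 1) / 2)
            + ((n * n - n * (n - 1) / 2) + 0) := by
          rw [ih, Finset.sum_congr rfl key2, Finset.sum_congr rfl key, hsum]
          · simp [hsum]
      _ = ((n + 1 : ℕ) : ℝ) * (((n + 1 : ℕ) : ℝ) ^ 2 - 1) / 3 := by push_cast; ring

lemma abs_fst_le_dist2D {m₁ m₂ : ℕ} (q p : Fin m₁ × Fin m₂) :
    |(((q.1 : ℕ) : ℝ)) - ((p.1 : ℕ) : ℝ)| ≤ dist2D q p := by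
  unfold dist2D
  have h : ((((q.1 : ℕ) : ℝ)) - ((p.1 : ℕ) : ℝ)) ^ 2 ≤
      ((((q.1 : ℕ) : ℝ)) - ((p.1 : ℕ) : ℝ)) ^ 2 +
      ((((q.2 : ℕ) : ℝ)) - ((p.2 : ℕ) : ℝ)) ^ 2 := by nlinarith [sq_nonneg ((((q.2 : ℕ) : ℝ)) - ((p.2 : ℕ) : ℝ))]
  have := Real.sqrt_le_sqrt h
  rwa [Real.sqrt_sq_eq_abs] at this

/-- The expected total Euclidean displacement of a uniformly random permutation of
the cells of an `m₁ × m₂` lattice is at least `m₂ · (m₁² − 1)/3`. -/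
theorem expected_displacement_2D_lower {m₁ m₂ : ℕ} (h₁ : 1 ≤ m₁) (h₂ : 1 ≤ m₂) :
    (m₂ : ℝ) * ((m₁ : ℝ) ^ 2 - 1) / 3 ≤
      (1 / (Nat.factorial (m₁ * m₂) : ℝ)) *
        ∑ π : Equiv.Perm (Fin m₁ × Fin m₂), ∑ p : Fin m₁ × Fin m₂, dist2D (π p) p := by
  classical
  set N := m₁ * m₂ with hNdef
  have hN : 0 < N := Nat.mul_pos h₁ h₂
  have hcard : Fintype.card (Fin m₁ × Fin m₂) = N := by simp [hNdef]
  set g : Fin m₁ × Fin m₂ → Fin m₁ × Fin m₂ → ℝ :=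
    fun q p => |(((q.1 : ℕ) : ℝ)) - ((p.1 : ℕ) : ℝ)| with hg
  -- Step 1: lower bound each distance by the row displacement
  have step1 : ∑ π : Equiv.Perm (Fin m₁ × Fin m₂), ∑ p : Fin m₁ × Fin m₂, g (π p) p
      ≤ ∑ π : Equiv.Perm (Fin m₁ × Fin m₂), ∑ p : Fin m₁ × Fin m₂, dist2D (π p) p := by
    refine Finset.sum_le_sum fun π _ => Finset.sum_le_sum fun p _ => ?_
    exact abs_fst_le_dist2D (π p) p
  -- Step 2: evaluate the permutation sum
  have step2 : ∑ π : Equiv.Perm (Fin m₁ × Fin m₂), ∑ p : Fin m₁ × Fin m₂, g (π p) p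
      = (Nat.factorial (N - 1) : ℝ) *
          ∑ p : Fin m₁ × Fin m₂, ∑ q : Fin m₁ × Fin m₂, g q p := by
    rw [Finset.sum_comm, Finset.mul_sum]
    refine Finset.sum_congr rfl fun p _ => ?_
    have := perm_sum_apply p (fun q => g q p)
    rwa [hcard] at this
  -- Step 3: evaluate the double sum over cells
  have step3 : ∑ p : Fin m₁ × Fin m₂, ∑ q : Fin m₁ × Fin m₂, g q p
      = (m₂ : ℝ) * ((m₂ : ℝ) *
          ∑ i : Fin m₁, ∑ j : Fin m₁, |((i : ℕ) : ℝ) - ((j : ℕ) : ℝ)|) := by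
    simp only [hg, Fintype.sum_prod_type, Finset.sum_const, Finset.card_univ,
      Fintype.card_fin, nsmul_eq_mul, Finset.mul_sum, ← Finset.sum_mul]
    rw [Finset.sum_comm]
  -- Step 4: the Fin double sum value
  have step4 : ∑ i : Fin m₁, ∑ j : Fin m₁, |((i : ℕ) : ℝ) - ((j : ℕ) : ℝ)|
      = (m₁ : ℝ) * ((m₁ : ℝ) ^ 2 - 1) / 3 := by
    rw [← sum_abs_diff m₁]
    rw [Finset.sum_range fun i => ∑ j ∈ Finset.range m₁, |(i : ℝ) - (j : ℝ)|]
    refine Finset.sum_congr rfl fun i _ => ?_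
    rw [Finset.sum_range fun j => |((i : ℕ) : ℝ) - (j : ℝ)|]
  -- Combine
  have hfac : (Nat.factorial N : ℝ) = (N : ℝ) * (Nat.factorial (N - 1) : ℝ) := by
    rw [← Nat.mul_factorial_pred hN.ne']; push_cast; ring
  have hfacpos : (0 : ℝ) < (Nat.factorial N : ℝ) := by positivity
  have hmono := mul_le_mul_of_nonneg_left step1 (le_of_lt (by positivity : (0:ℝ) < 1 / (Nat.factorial N : ℝ)))
  refine le_trans ?_ hmono
  rw [step2, step3, step4]
  rw [hfac]
  have hm₁ : (0:ℝ) < m₁ := by exact_mod_cast h₁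
  have hm₂ : (0:ℝ) < m₂ := by exact_mod_cast h₂
  have hN' : ((N : ℕ) : ℝ) = (m₁ : ℝ) * m₂ := by push_cast [hNdef]; ring
  have hfp : (0:ℝ) < (Nat.factorial (N-1) : ℝ) := by positivity
  rw [hN']
  refine le_of_eq ?_
  field_simp
end
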